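/- arXiv:1611.08257 — 3 statements merged into one kernel-verified Lean document; each statement's English description precedes it below -/
import Mathlib

section
/- Let x̄ be feasible for the constraint system F(x) ∈ Ω, and assume that for every continuously differentiable function f : ℝ^n → ℝ for which x̄ is a local minimizer of min f(x) subject to F(x) ∈ Ω, the point x̄ is extended M-stationary. Then the generalized Guignard constraint qualification GGCQ holds at x̄, i.e. N̂(x̄;𝓕) = N̂(0; T_lin(x̄)). -/
noncomputable section

open Filter Topology Set

/-- Euclidean space `ℝ^n`. -/
abbrev Euc (n : ℕ) : Type := EuclideanSpace ℝ (Fin n)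

variable {E : Type*} [NormedAddCommGroup E] [NormedSpace ℝ E]
variable {Y : Type*} [NormedAddCommGroup Y] [NormedSpace ℝ Y]

/-- The contingent (Bouligand/tangent) cone `T(x;Ω)`; empty when `x ∉ Ω`. -/
def tcone (Ω : Set E) (x : E) : Set E :=
  {u | x ∈ Ω ∧ ∃ t : ℕ → ℝ, ∃ w : ℕ → E, (∀ k, 0 < t k) ∧
    Tendsto t atTop (𝓝 0) ∧ Tendsto w atTop (𝓝 u) ∧ ∀ k, x + t k • w k ∈ Ω}

/-- The Fréchet (regular) normal cone `N̂(x;Ω)`, viewed as a set of continuous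
linear functionals; empty when `x ∉ Ω`. -/
def fnc (Ω : Set E) (x : E) : Set (E →L[ℝ] ℝ) :=
  {ξ | x ∈ Ω ∧ ∀ ε : ℝ, 0 < ε → ∃ δ : ℝ, 0 < δ ∧
    ∀ y ∈ Ω, ‖y - x‖ < δ → ξ (y - x) ≤ ε * ‖y - x‖}

/-- The limiting (Mordukhovich) normal cone `N(x;Ω)`; empty when `x ∉ Ω`. -/
def lnc (Ω : Set E) (x : E) : Set (E →L[ℝ] ℝ) :=
  {ξ | x ∈ Ω ∧ ∃ xk : ℕ → E, ∃ ξk : ℕ → (E →L[ℝ] ℝ),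
    Tendsto xk atTop (𝓝 x) ∧ Tendsto ξk atTop (𝓝 ξ) ∧ ∀ k, ξk k ∈ fnc Ω (xk k)}

/-- The directional limiting normal cone `N(x;Ω;u)`; empty when `x ∉ Ω`. -/
def dlnc (Ω : Set E) (x u : E) : Set (E →L[ℝ] ℝ) :=
  {ξ | x ∈ Ω ∧ ∃ t : ℕ → ℝ, ∃ w : ℕ → E, ∃ ξk : ℕ → (E →L[ℝ] ℝ), (∀ k, 0 < t k) ∧
    Tendsto t atTop (𝓝 0) ∧ Tendsto w atTop (𝓝 u) ∧ Tendsto ξk atTop (𝓝 ξ) ∧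
    ∀ k, ξk k ∈ fnc Ω (x + t k • w k)}

/-- A convex polyhedron: a finite intersection of closed halfspaces. -/
def IsPolyhedron (P : Set E) : Prop :=
  ∃ k : ℕ, ∃ a : Fin k → (E →L[ℝ] ℝ), ∃ b : Fin k → ℝ, P = {x | ∀ j, a j x ≤ b j}

/-- A union of finitely many convex polyhedra. -/
def IsFinUnionPolyhedra (Ω : Set E) : Prop :=
  ∃ p : ℕ, ∃ P : Fin p → Set E, (∀ i, IsPolyhedron (P i)) ∧ Ω = ⋃ i, P i

/-- The constraint multifunction `M(x) = F(x) - Ω`. -/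
def cmap (F : E → Y) (Ω : Set Y) : E → Set Y := fun x => {y | F x - y ∈ Ω}

/-- Metric subregularity of `M` at `(x̄,ȳ) ∈ gph M`. -/
def SubregAt (M : E → Set Y) (x' : E) (y' : Y) : Prop :=
  y' ∈ M x' ∧ ∃ κ : ℝ, 0 < κ ∧ ∃ ε : ℝ, 0 < ε ∧ ∀ x : E, dist x x' < ε →
    EMetric.infEdist x {z | y' ∈ M z} ≤ ENNReal.ofReal κ * EMetric.infEdist y' (M x)

/-- The directional neighborhood `V_{ρ,δ}(u)`. -/
def dirNbhd (u : E) (ρ δ : ℝ) : Set E :=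
  {z | ‖z‖ ≤ ρ ∧ ‖‖u‖ • z - ‖z‖ • u‖ ≤ δ * (‖z‖ * ‖u‖)}

/-- Metric subregularity of `M` in direction `u` at `(x̄,ȳ) ∈ gph M`. -/
def SubregDir (M : E → Set Y) (x' : E) (y' : Y) (u : E) : Prop :=
  y' ∈ M x' ∧ ∃ ρ : ℝ, 0 < ρ ∧ ∃ δ : ℝ, 0 < δ ∧ ∃ κ : ℝ, 0 < κ ∧
    ∀ z ∈ dirNbhd u ρ δ,
      EMetric.infEdist (x' + z) {z' | y' ∈ M z'} ≤
        ENNReal.ofReal κ * EMetric.infEdist y' (M (x' + z))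

/-- Mixed metric regularity/subregularity of `M = (M₁,M₂)` at `(x̄,(ȳ₁,ȳ₂))`. -/
def MixedRegSubreg {Y₁ Y₂ : Type*} [NormedAddCommGroup Y₁] [NormedSpace ℝ Y₁]
    [NormedAddCommGroup Y₂] [NormedSpace ℝ Y₂]
    (M₁ : E → Set Y₁) (M₂ : E → Set Y₂) (x' : E) (y₁' : Y₁) (y₂' : Y₂) : Prop :=
  y₁' ∈ M₁ x' ∧ y₂' ∈ M₂ x' ∧ ∃ κ : ℝ, 0 < κ ∧ ∃ ε : ℝ, 0 < ε ∧
    ∀ x : E, ∀ y₁ : Y₁, dist x x' < ε → dist y₁ y₁' < ε →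
      EMetric.infEdist x {z | y₁ ∈ M₁ z ∧ y₂' ∈ M₂ z} ≤
        ENNReal.ofReal κ * EMetric.infEdist (y₁, y₂') (M₁ x ×ˢ M₂ x)


section Aux

variable {E : Type*} [NormedAddCommGroup E] [NormedSpace ℝ E]

lemma nonpos_of_forall_le_eps {c C : ℝ} (hC : 0 ≤ C) (h : ∀ ε : ℝ, 0 < ε → c ≤ ε * C) :
    c ≤ 0 := by
  by_contra hc
  push_neg at hc
  have h1 := h (c / (2 * (C + 1))) (by positivity)
  rw [div_mul_eq_mul_div, le_div_iff₀ (by positivity)] at h1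
  nlinarith

lemma mem_fnc_zero_of_nonpos {C : Set E} {ξ : E →L[ℝ] ℝ} (h0 : (0:E) ∈ C)
    (h : ∀ u ∈ C, ξ u ≤ 0) : ξ ∈ fnc C 0 := by
  refine ⟨h0, fun ε hε => ⟨1, one_pos, fun y hy _ => ?_⟩⟩
  have h1 : ξ (y - 0) ≤ 0 := by simpa using h y hy
  have h2 : 0 ≤ ε * ‖y - (0:E)‖ := by positivity
  linarith

lemma nonpos_of_mem_fnc_zero {C : Set E} {ξ : E →L[ℝ] ℝ}
    (hcone : ∀ u ∈ C, ∀ s : ℝ, 0 < s → s • u ∈ C)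
    (hξ : ξ ∈ fnc C 0) {u : E} (hu : u ∈ C) : ξ u ≤ 0 := by
  refine nonpos_of_forall_le_eps (norm_nonneg u) fun ε hε => ?_
  obtain ⟨δ, hδ, hδp⟩ := hξ.2 ε hε
  set s : ℝ := δ / (2 * (‖u‖ + 1)) with hs
  have hspos : 0 < s := by positivity
  have hkey : s * (‖u‖ + 1) = δ / 2 := by rw [hs]; field_simp
  have hmem := hcone u hu s hspos
  have hnorm : ‖s • u - (0:E)‖ < δ := by
    rw [sub_zero, norm_smul, Real.norm_eq_abs, abs_of_pos hspos]
    nlinarith [norm_nonneg u]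
  have h1 := hδp _ hmem hnorm
  rw [sub_zero, map_smul, norm_smul, Real.norm_eq_abs, abs_of_pos hspos] at h1
  have h2 : s * ξ u ≤ s * (ε * ‖u‖) := by
    calc s * ξ u = s • ξ u := rfl
    _ ≤ ε * (s * ‖u‖) := h1
    _ = s * (ε * ‖u‖) := by ring
  exact (mul_le_mul_iff_right₀ hspos).mp h2

lemma fnc_nonpos_convex {Ω P : Set E} (hP : Convex ℝ P) (hPΩ : P ⊆ Ω)
    {y z : E} (hy : y ∈ P) (hz : z ∈ P) {μ : E →L[ℝ] ℝ} (hμ : μ ∈ fnc Ω y) :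
    μ (z - y) ≤ 0 := by
  refine nonpos_of_forall_le_eps (norm_nonneg (z - y)) fun ε hε => ?_
  obtain ⟨δ, hδ, hδp⟩ := hμ.2 ε hε
  set θ : ℝ := δ / (2 * (‖z - y‖ + 1)) with hθdef
  have hθpos : 0 < θ := by positivity
  have hkey : θ * (‖z - y‖ + 1) = δ / 2 := by rw [hθdef]; field_simp
  set t : ℝ := min θ 1 with ht
  have htpos : 0 < t := lt_min hθpos one_pos
  have ht1 : t ≤ 1 := min_le_right _ _
  have htθ : t ≤ θ := min_le_left _ _
  have hp : y + t • (z - y) ∈ P := by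
    have := hP hy hz (by linarith : (0:ℝ) ≤ 1 - t) htpos.le (by ring)
    convert this using 1
    module
  have hnorm : ‖(y + t • (z - y)) - y‖ < δ := by
    rw [add_sub_cancel_left, norm_smul, Real.norm_eq_abs, abs_of_pos htpos]
    nlinarith [norm_nonneg (z - y)]
  have h1 := hδp _ (hPΩ hp) hnorm
  rw [add_sub_cancel_left, map_smul, norm_smul, Real.norm_eq_abs, abs_of_pos htpos] at h1
  have h2 : t * μ (z - y) ≤ t * (ε * ‖z - y‖) := by
    calc t * μ (z - y) = t • μ (z - y) := rfl
    _ ≤ ε * (t * ‖z - y‖) := h1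
    _ = t * (ε * ‖z - y‖) := by ring
  exact (mul_le_mul_iff_right₀ htpos).mp h2

lemma dlnc_nonpos {Ω : Set E} (hΩ : IsFinUnionPolyhedra Ω) {x v : E}
    {μ : E →L[ℝ] ℝ} (hμ : μ ∈ dlnc Ω x v) : μ v ≤ 0 := by
  obtain ⟨hx, t, w, μk, htpos, ht0, hwv, hμlim, hfk⟩ := hμ
  obtain ⟨p, P, hPoly, hUnion⟩ := hΩ
  set y : ℕ → E := fun k => x + t k • w k with hy
  have hyΩ : ∀ k, y k ∈ Ω := fun k => (hfk k).1
  have hex : ∀ k, ∃ i : Fin p, y k ∈ P i := by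
    intro k
    have := hyΩ k
    rw [hUnion, mem_iUnion] at this
    exact this
  set c : ℕ → Fin p := fun k => (hex k).choose with hc
  have hcP : ∀ k, y k ∈ P (c k) := fun k => (hex k).choose_spec
  obtain ⟨i, hi⟩ := Finite.exists_infinite_fiber c
  have hinf : {k | c k = i}.Infinite := by
    rw [← Set.infinite_coe_iff]
    exact hi
  obtain ⟨φ, hφmono, hφP⟩ := Filter.extraction_of_frequently_atTop
    (Nat.frequently_atTop_iff_infinite.mpr hinf)
  have hyP : ∀ k, y (φ k) ∈ P i := fun k => (hφP k) ▸ hcP (φ k)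
  have htφ : Tendsto (fun k => t (φ k)) atTop (𝓝 0) := ht0.comp hφmono.tendsto_atTop
  have hwφ : Tendsto (fun k => w (φ k)) atTop (𝓝 v) := hwv.comp hφmono.tendsto_atTop
  have hμφ : Tendsto (fun k => μk (φ k)) atTop (𝓝 μ) := hμlim.comp hφmono.tendsto_atTop
  have hyx : Tendsto (fun k => y (φ k)) atTop (𝓝 x) := by
    have h1 : Tendsto (fun k => t (φ k) • w (φ k)) atTop (𝓝 ((0:ℝ) • v)) := htφ.smul hwφ
    rw [zero_smul] at h1
    simpa using tendsto_const_nhds.add h1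
  obtain ⟨K, a, b, hPdef⟩ := hPoly i
  have hPclosed : IsClosed (P i) := by
    rw [hPdef]
    have : {x : E | ∀ j, a j x ≤ b j} = ⋂ j, {x : E | a j x ≤ b j} := by
      ext z; simp [mem_iInter]
    rw [this]
    exact isClosed_iInter fun j => isClosed_le (a j).continuous continuous_const
  have hxP : x ∈ P i := hPclosed.mem_of_tendsto hyx (Eventually.of_forall hyP)
  have hPconvex : Convex ℝ (P i) := by
    rw [hPdef]
    intro u hu z hz α β hα hβ hαβ j
    calc a j (α • u + β • z) = α * a j u + β * a j z := by
          rw [map_add, map_smul, map_smul]; rfl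
    _ ≤ α * b j + β * b j := by
          apply add_le_add
          · exact mul_le_mul_of_nonneg_left (hu j) hα
          · exact mul_le_mul_of_nonneg_left (hz j) hβ
    _ = b j := by rw [← add_mul, hαβ, one_mul]
  have hPsub : P i ⊆ Ω := by rw [hUnion]; exact subset_iUnion P i
  have hxPj : ∀ j, a j x ≤ b j := by rw [hPdef] at hxP; exact hxP
  have hyPj : ∀ k j, a j (y (φ k)) ≤ b j := by
    intro k
    have := hyP k; rw [hPdef] at this; exact this
  have hav : ∀ j, a j x = b j → a j v ≤ 0 := by
    intro j hj
    have hwle : ∀ k, a j (w (φ k)) ≤ 0 := by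
      intro k
      have h1 := hyPj k j
      rw [hy] at h1
      simp only [map_add, map_smul, smul_eq_mul] at h1
      have h2 : t (φ k) * a j (w (φ k)) ≤ 0 := by rw [hj] at h1; linarith
      exact nonpos_of_mul_nonpos_right h2 (htpos (φ k))
    exact le_of_tendsto (((a j).continuous.tendsto v).comp hwφ) (Eventually.of_forall hwle)
  have hev : ∀ᶠ k in atTop, ∀ j, a j x < b j → a j (y (φ k)) < b j := by
    refine eventually_all.2 fun j => ?_
    by_cases hj : a j x < b j
    · have : Tendsto (fun k => a j (y (φ k))) atTop (𝓝 (a j x)) :=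
        ((a j).continuous.tendsto x).comp hyx
      exact (this.eventually_lt_const hj).mono fun k h _ => h
    · exact Eventually.of_forall fun k h => absurd h hj
  have hμv : ∀ᶠ k in atTop, μk (φ k) v ≤ 0 := by
    filter_upwards [hev] with k hk
    have hevs : ∀ᶠ s in 𝓝[>] (0:ℝ), y (φ k) + s • v ∈ P i := by
      rw [hPdef]
      simp only [mem_setOf_eq]
      refine eventually_all.2 fun j => ?_
      by_cases hj : a j x < b j
      · have hyk := hk j hj
        have hts : Tendsto (fun s : ℝ => a j (y (φ k)) + s * a j v) (𝓝[>] 0)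
            (𝓝 (a j (y (φ k)))) := by
          have : Tendsto (fun s : ℝ => a j (y (φ k)) + s * a j v) (𝓝 0)
              (𝓝 (a j (y (φ k)) + 0 * a j v)) :=
            (continuous_const.add (continuous_id.mul continuous_const)).tendsto 0
          rw [zero_mul, add_zero] at this
          exact this.mono_left nhdsWithin_le_nhds
        filter_upwards [hts.eventually_lt_const hyk] with s hs
        rw [map_add, map_smul, smul_eq_mul]
        exact hs.le
      · have hj' : a j x = b j := le_antisymm (hxPj j) (not_lt.mp hj)
        filter_upwards [self_mem_nhdsWithin] with s hs
        rw [map_add, map_smul, smul_eq_mul]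
        have h1 : s * a j v ≤ 0 := mul_nonpos_of_nonneg_of_nonpos (le_of_lt hs) (hav j hj')
        linarith [hyPj k j]
    obtain ⟨s, hsP, hs0⟩ := (hevs.and self_mem_nhdsWithin).exists
    have h1 : μk (φ k) ((y (φ k) + s • v) - y (φ k)) ≤ 0 :=
      fnc_nonpos_convex hPconvex hPsub (hyP k) hsP (hfk (φ k))
    rw [add_sub_cancel_left, map_smul, smul_eq_mul] at h1
    exact nonpos_of_mul_nonpos_right h1 hs0
  have hevalc : Tendsto (fun k => μk (φ k) v) atTop (𝓝 (μ v)) := by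
    have hc : Continuous fun L : E →L[ℝ] ℝ => L v := (ContinuousLinearMap.apply ℝ ℝ v).continuous
    exact (hc.tendsto μ).comp hμφ
  exact le_of_tendsto hevalc hμv

lemma tcone_smul_mem {Ω : Set E} {x v : E} (hv : v ∈ tcone Ω x) {s : ℝ} (hs : 0 < s) :
    s • v ∈ tcone Ω x := by
  obtain ⟨hx, t, w, htpos, ht0, hwv, hmem⟩ := hv
  refine ⟨hx, fun k => t k / s, fun k => s • w k,
    fun k => div_pos (htpos k) hs, by simpa using ht0.div_const s, hwv.const_smul s, ?_⟩
  intro k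
  have hseq : (t k / s) • (s • w k) = t k • w k := by
    rw [smul_smul, div_mul_cancel₀ _ hs.ne']
  rw [hseq]
  exact hmem k

end Aux

section Variational

open intervalIntegral MeasureTheory

variable {n : ℕ} {S : Set (Euc n)} {xb : Euc n} {ξ : Euc n →L[ℝ] ℝ}

set_option maxHeartbeats 1000000 in
set_option synthInstance.maxHeartbeats 400000 in
/-- Smooth variational description of Fréchet normals. -/
lemma smooth_variational (hξ : ξ ∈ fnc S xb) :
    ∃ f : Euc n → ℝ, ContDiff ℝ 1 f ∧ (∀ y ∈ S, f xb ≤ f y) ∧ fderiv ℝ f xb = -ξ := by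
  classical
  obtain ⟨hxbS, hprop⟩ := hξ
  -- the modulus function ρ
  set ρ : ℝ → ℝ := fun t => sSup ((fun y => ξ (y - xb)) '' {y | y ∈ S ∧ ‖y - xb‖ ≤ t})
    with hρdef
  have him : ∀ t : ℝ, ∀ r ∈ (fun y => ξ (y - xb)) '' {y | y ∈ S ∧ ‖y - xb‖ ≤ t},
      r ≤ ‖ξ‖ * t := by
    rintro t r ⟨y, ⟨hyS, hyn⟩, rfl⟩
    calc ξ (y - xb) ≤ ‖ξ (y - xb)‖ := le_abs_self _
    _ ≤ ‖ξ‖ * ‖y - xb‖ := ξ.le_opNorm _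
    _ ≤ ‖ξ‖ * t := by
        exact mul_le_mul_of_nonneg_left hyn (norm_nonneg ξ)
  have hmem0 : ∀ t : ℝ, 0 ≤ t →
      (0:ℝ) ∈ (fun y => ξ (y - xb)) '' {y | y ∈ S ∧ ‖y - xb‖ ≤ t} := by
    intro t ht
    exact ⟨xb, ⟨hxbS, by simp [ht]⟩, by simp⟩
  have hbdd : ∀ t : ℝ, BddAbove ((fun y => ξ (y - xb)) '' {y | y ∈ S ∧ ‖y - xb‖ ≤ t}) :=
    fun t => ⟨‖ξ‖ * t, fun r hr => him t r hr⟩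
  have hρ_neg : ∀ t : ℝ, t < 0 → ρ t = 0 := by
    intro t ht
    have : {y | y ∈ S ∧ ‖y - xb‖ ≤ t} = ∅ := by
      ext y
      simp only [mem_setOf_eq, mem_empty_iff_false, iff_false, not_and, not_le]
      exact fun _ => lt_of_lt_of_le ht (norm_nonneg _)
    rw [hρdef]
    simp [this, Real.sSup_empty]
  have hρ_nonneg : ∀ t : ℝ, 0 ≤ ρ t := by
    intro t
    rcases lt_or_ge t 0 with ht | ht
    · rw [hρ_neg t ht]
    · exact le_csSup (hbdd t) (hmem0 t ht)
  have hρ_mono : Monotone ρ := by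
    intro s t hst
    rcases lt_or_ge s 0 with hs | hs
    · rw [hρ_neg s hs]; exact hρ_nonneg t
    · exact csSup_le_csSup (hbdd t) ⟨0, hmem0 s hs⟩
        (image_mono fun y hy => ⟨hy.1, hy.2.trans hst⟩)
  have hρ_ub : ∀ t : ℝ, 0 ≤ t → ρ t ≤ ‖ξ‖ * t :=
    fun t ht => Real.sSup_le (him t) (by positivity)
  have hρ_ge : ∀ y ∈ S, ξ (y - xb) ≤ ρ (‖y - xb‖) :=
    fun y hy => le_csSup (hbdd _) ⟨y, ⟨hy, le_rfl⟩, rfl⟩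
  have hρ_small : ∀ ε : ℝ, 0 < ε → ∃ δ : ℝ, 0 < δ ∧ ∀ t, 0 ≤ t → t < δ → ρ t ≤ ε * t := by
    intro ε hε
    obtain ⟨δ, hδ, hδp⟩ := hprop ε hε
    refine ⟨δ, hδ, fun t ht htδ => Real.sSup_le ?_ (by positivity)⟩
    rintro r ⟨y, ⟨hyS, hyn⟩, rfl⟩
    calc ξ (y - xb) ≤ ε * ‖y - xb‖ := hδp y hyS (lt_of_le_of_lt hyn htδ)
    _ ≤ ε * t := mul_le_mul_of_nonneg_left hyn hε.le
  have hρ_int : ∀ a b : ℝ, IntervalIntegrable ρ volume a b := fun a b =>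
    hρ_mono.intervalIntegrable
  -- first average
  set H : ℝ → ℝ := fun t => ∫ s in (0:ℝ)..t, ρ s with hHdef
  have hH_cont : Continuous H := intervalIntegral.continuous_primitive hρ_int 0
  set ρ₁ : ℝ → ℝ := fun t => (H (2*t) - H t) / t with hρ₁def
  have hH2 : ∀ t : ℝ, H (2*t) - H t = ∫ s in t..(2*t), ρ s := by
    intro t
    have := integral_add_adjacent_intervals (hρ_int 0 t) (hρ_int t (2*t))
    rw [hHdef]
    simp only
    linarith [this]
  have hρ₁_nonpos0 : ∀ t : ℝ, t ≤ 0 → ρ₁ t = 0 := by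
    intro t ht
    rcases eq_or_lt_of_le ht with rfl | ht'
    · simp [hρ₁def]
    · have hz : ∫ s in t..(2*t), ρ s = ∫ s in t..(2*t), (0:ℝ) := by
        apply integral_congr
        intro s hs
        rw [uIcc_of_ge (by linarith : 2*t ≤ t)] at hs
        exact hρ_neg s (lt_of_le_of_lt hs.2 ht')
      rw [hρ₁def]
      simp only
      rw [hH2 t, hz]
      simp
  have hρ₁_nonneg : ∀ t : ℝ, 0 ≤ ρ₁ t := by
    intro t
    rcases le_or_gt t 0 with ht | ht
    · rw [hρ₁_nonpos0 t ht]
    · rw [hρ₁def]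
      simp only
      rw [hH2 t]
      apply div_nonneg _ ht.le
      apply intervalIntegral.integral_nonneg (by linarith)
      exact fun s _ => hρ_nonneg s
  have hρ₁_lb : ∀ t r : ℝ, 0 < t → t ≤ r → ρ t ≤ ρ₁ r := by
    intro t r ht htr
    have hr : 0 < r := lt_of_lt_of_le ht htr
    rw [hρ₁def]
    simp only
    rw [hH2 r, le_div_iff₀ hr]
    have : ∫ s in r..(2*r), ρ t ≤ ∫ s in r..(2*r), ρ s := by
      apply integral_mono_on (by linarith) (intervalIntegrable_const) (hρ_int r (2*r))
      exact fun s hs => hρ_mono (htr.trans hs.1)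
    rw [intervalIntegral.integral_const] at this
    have heq : (2*r - r) • ρ t = ρ t * r := by rw [smul_eq_mul]; ring
    linarith
  have hρ₁_le : ∀ r : ℝ, 0 < r → ρ₁ r ≤ ρ (2*r) := by
    intro r hr
    rw [hρ₁def]
    simp only
    rw [hH2 r, div_le_iff₀ hr]
    have : ∫ s in r..(2*r), ρ s ≤ ∫ s in r..(2*r), ρ (2*r) := by
      apply integral_mono_on (by linarith) (hρ_int r (2*r)) (intervalIntegrable_const)
      exact fun s hs => hρ_mono hs.2
    rw [intervalIntegral.integral_const] at this
    have heq : (2*r - r) • ρ (2*r) = ρ (2*r) * r := by rw [smul_eq_mul]; ring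
    linarith
  have hρ₁_ub : ∀ t r : ℝ, 0 < t → 0 < r → r ≤ 2*t → ρ₁ r ≤ ρ (4*t) := by
    intro t r ht hr hr2
    exact (hρ₁_le r hr).trans (hρ_mono (by linarith))
  have hρ₁_cont : Continuous ρ₁ := by
    rw [continuous_iff_continuousAt]
    intro r
    rcases eq_or_ne r 0 with rfl | hr
    · have hb : ∀ s : ℝ, ‖ρ₁ s‖ ≤ 2 * ‖ξ‖ * |s| := by
        intro s
        rcases le_or_gt s 0 with hs | hs
        · rw [hρ₁_nonpos0 s hs]; simp; positivity
        · rw [Real.norm_eq_abs, abs_of_nonneg (hρ₁_nonneg s), abs_of_pos hs]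
          calc ρ₁ s ≤ ρ (2*s) := hρ₁_le s hs
          _ ≤ ‖ξ‖ * (2*s) := hρ_ub _ (by linarith)
          _ = 2 * ‖ξ‖ * s := by ring
      have h0 : ρ₁ 0 = 0 := hρ₁_nonpos0 0 le_rfl
      rw [ContinuousAt, h0]
      apply squeeze_zero_norm hb
      have : Continuous fun s : ℝ => 2 * ‖ξ‖ * |s| := continuous_const.mul continuous_abs
      have h := this.tendsto 0
      simpa using h
    · apply ContinuousAt.div
      · exact ((hH_cont.comp (continuous_const.mul continuous_id)).sub hH_cont).continuousAt
      · exact continuousAt_id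
      · exact hr
  -- second average
  set H₁ : ℝ → ℝ := fun t => ∫ s in (0:ℝ)..t, ρ₁ s with hH₁def
  have hρ₁_int : ∀ a b : ℝ, IntervalIntegrable ρ₁ volume a b := fun a b =>
    hρ₁_cont.intervalIntegrable a b
  have hH₁_deriv : ∀ t : ℝ, HasDerivAt H₁ (ρ₁ t) t := fun t =>
    integral_hasDerivAt_right (hρ₁_int 0 t)
      (hρ₁_cont.aestronglyMeasurable.stronglyMeasurableAtFilter)
      hρ₁_cont.continuousAt
  have hH₁_cont : Continuous H₁ := intervalIntegral.continuous_primitive hρ₁_int 0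
  have hH₁2 : ∀ t : ℝ, H₁ (2*t) - H₁ t = ∫ s in t..(2*t), ρ₁ s := by
    intro t
    have := integral_add_adjacent_intervals (hρ₁_int 0 t) (hρ₁_int t (2*t))
    rw [hH₁def]
    simp only
    linarith [this]
  set ρ₂ : ℝ → ℝ := fun t => (H₁ (2*t) - H₁ t) / t with hρ₂def
  set dρ : ℝ → ℝ := fun t => ((ρ₁ (2*t) * 2 - ρ₁ t) * t - (H₁ (2*t) - H₁ t) * 1) / t ^ 2
    with hdρdef
  have hρ₂0 : ρ₂ 0 = 0 := by simp [hρ₂def]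
  have hρ₂_ge : ∀ t : ℝ, 0 < t → ρ t ≤ ρ₂ t := by
    intro t ht
    rw [hρ₂def]
    simp only
    rw [hH₁2 t, le_div_iff₀ ht]
    have : ∫ s in t..(2*t), ρ t ≤ ∫ s in t..(2*t), ρ₁ s := by
      apply integral_mono_on (by linarith) (intervalIntegrable_const) (hρ₁_int t (2*t))
      exact fun s hs => hρ₁_lb t s ht hs.1
    rw [intervalIntegral.integral_const] at this
    have heq : (2*t - t) • ρ t = ρ t * t := by rw [smul_eq_mul]; ring
    linarith
  have hρ₂_ub : ∀ t : ℝ, 0 < t → ρ₂ t ≤ ρ (4*t) := by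
    intro t ht
    rw [hρ₂def]
    simp only
    rw [hH₁2 t, div_le_iff₀ ht]
    have : ∫ s in t..(2*t), ρ₁ s ≤ ∫ s in t..(2*t), ρ (4*t) := by
      apply integral_mono_on (by linarith) (hρ₁_int t (2*t)) (intervalIntegrable_const)
      exact fun s hs => hρ₁_ub t s ht (lt_of_lt_of_le ht hs.1) hs.2
    rw [intervalIntegral.integral_const] at this
    have heq : (2*t - t) • ρ (4*t) = ρ (4*t) * t := by rw [smul_eq_mul]; ring
    linarith
  have hρ₂_nonneg : ∀ t : ℝ, 0 ≤ t → 0 ≤ ρ₂ t := by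
    intro t ht
    rcases eq_or_lt_of_le ht with rfl | ht'
    · rw [hρ₂0]
    · exact le_trans (hρ_nonneg t) (hρ₂_ge t ht')
  have hρ₂_deriv : ∀ t : ℝ, t ≠ 0 → HasDerivAt ρ₂ (dρ t) t := by
    intro t ht
    have h2t : HasDerivAt (fun s : ℝ => 2 * s) 2 t := by
      simpa using (hasDerivAt_id t).const_mul 2
    have hnum : HasDerivAt (fun s => H₁ (2*s) - H₁ s) (ρ₁ (2*t) * 2 - ρ₁ t) t :=
      (HasDerivAt.comp t (hH₁_deriv (2*t)) h2t).sub (hH₁_deriv t)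
    have hden : HasDerivAt (fun s : ℝ => s) 1 t := hasDerivAt_id t
    exact hnum.div hden ht
  have hdρ_bound : ∀ t : ℝ, 0 < t → |dρ t| ≤ 4 * ρ (4*t) / t := by
    intro t ht
    have h1 : 0 ≤ ρ₁ (2*t) := hρ₁_nonneg _
    have h2 : ρ₁ (2*t) ≤ ρ (4*t) := hρ₁_ub t (2*t) ht (by linarith) le_rfl
    have h3 : 0 ≤ ρ₁ t := hρ₁_nonneg _
    have h4 : ρ₁ t ≤ ρ (4*t) := hρ₁_ub t t ht ht (by linarith)
    have h5 : 0 ≤ H₁ (2*t) - H₁ t := by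
      rw [hH₁2 t]
      apply intervalIntegral.integral_nonneg (by linarith)
      exact fun s _ => hρ₁_nonneg s
    have h6 : H₁ (2*t) - H₁ t ≤ ρ (4*t) * t := by
      have := hρ₂_ub t ht
      rw [hρ₂def] at this
      simp only at this
      rw [div_le_iff₀ ht] at this
      exact this
    have hnum : |(ρ₁ (2*t) * 2 - ρ₁ t) * t - (H₁ (2*t) - H₁ t) * 1| ≤ 3 * t * ρ (4*t) := by
      rw [abs_le]
      constructor <;> nlinarith [hρ_nonneg (4*t)]
    rw [hdρdef]
    simp only
    rw [abs_div, abs_of_pos (by positivity : (0:ℝ) < t^2), div_le_div_iff₀ (by positivity) ht]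
    nlinarith [hρ_nonneg (4*t)]
  have hdρ_small : ∀ ε : ℝ, 0 < ε → ∃ δ : ℝ, 0 < δ ∧ ∀ t, 0 < t → t < δ → |dρ t| ≤ ε := by
    intro ε hε
    obtain ⟨δ, hδ, hδp⟩ := hρ_small (ε/16) (by positivity)
    refine ⟨δ/4, by positivity, fun t ht htδ => ?_⟩
    have h1 : ρ (4*t) ≤ ε/16 * (4*t) := hδp (4*t) (by linarith) (by linarith)
    calc |dρ t| ≤ 4 * ρ (4*t) / t := hdρ_bound t ht
    _ ≤ 4 * (ε/16 * (4*t)) / t := by gcongr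
    _ = ε * t / t := by ring
    _ = ε := by field_simp
  -- the candidate derivative
  set A : Euc n → (Euc n →L[ℝ] ℝ) :=
    fun x => dρ (‖x - xb‖) • ((‖x - xb‖)⁻¹ • (innerSL ℝ (x - xb))) with hAdef
  set φ : Euc n → (Euc n →L[ℝ] ℝ) := fun x => A x - ξ with hφdef
  have hAxb : A xb = 0 := by rw [hAdef]; simp
  have hφxb : φ xb = -ξ := by rw [hφdef]; simp only; rw [hAxb, zero_sub]
  have hnorm_deriv : ∀ x : Euc n, x ≠ xb →
      HasFDerivAt (fun z => ‖z - xb‖) ((‖x - xb‖)⁻¹ • (innerSL ℝ (x - xb))) x := by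
    intro x hx
    have hsub : x - xb ≠ 0 := sub_ne_zero.mpr hx
    have htpos : 0 < ‖x - xb‖ := norm_pos_iff.mpr hsub
    have hq : HasFDerivAt (fun z : Euc n => ‖z - xb‖ ^ 2)
        (2 • ((innerSL ℝ (x - xb)).comp (ContinuousLinearMap.id ℝ (Euc n)))) x := by
      have := ((hasFDerivAt_id x).sub_const xb).norm_sq
      simpa using this
    have hne : ‖x - xb‖ ^ 2 ≠ 0 := by positivity
    have hs : HasDerivAt Real.sqrt (1 / (2 * Real.sqrt (‖x - xb‖^2))) (‖x - xb‖^2) :=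
      Real.hasDerivAt_sqrt hne
    have hcomp := hs.comp_hasFDerivAt x hq
    have hfun : (Real.sqrt ∘ fun z : Euc n => ‖z - xb‖ ^ 2) = fun z => ‖z - xb‖ := by
      funext z
      simp only [Function.comp_apply]
      rw [Real.sqrt_sq (norm_nonneg _)]
    rw [hfun] at hcomp
    refine hcomp.congr_fderiv ?_
    symm
    rw [Real.sqrt_sq (norm_nonneg _)]
    ext z
    simp only [ContinuousLinearMap.smul_apply, ContinuousLinearMap.coe_smul',
      Pi.smul_apply, ContinuousLinearMap.coe_comp', Function.comp_apply,
      ContinuousLinearMap.coe_id', id_eq, smul_eq_mul]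
    field_simp
    ring
  have hlin' : ∀ x : Euc n, HasFDerivAt (fun z : Euc n => ξ (z - xb)) (ξ : Euc n →L[ℝ] ℝ) x := by
    intro x
    have h := ξ.hasFDerivAt.comp x ((hasFDerivAt_id x).sub_const xb)
    rw [ContinuousLinearMap.comp_id] at h
    exact h
  have hfd : ∀ x : Euc n, HasFDerivAt (fun z : Euc n => ρ₂ ‖z - xb‖ - ξ (z - xb)) (φ x) x := by
    intro x
    rcases eq_or_ne x xb with hxeq | hx
    · rw [hxeq, hφxb]
      have hg : HasFDerivAt (fun z : Euc n => ρ₂ ‖z - xb‖) (0 : Euc n →L[ℝ] ℝ) xb := by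
        rw [hasFDerivAt_iff_isLittleO_nhds_zero, Asymptotics.isLittleO_iff]
        intro c hc
        obtain ⟨δ, hδ, hδp⟩ := hρ_small (c/4) (by positivity)
        rw [Metric.eventually_nhds_iff]
        refine ⟨δ/4, by positivity, fun {h} hh => ?_⟩
        rw [dist_zero_right] at hh
        have h1 : xb + h - xb = h := by abel
        have h2 : xb - xb = (0 : Euc n) := sub_self xb
        simp only [h1, h2, norm_zero, hρ₂0, sub_zero, ContinuousLinearMap.zero_apply]
        rcases eq_or_lt_of_le (norm_nonneg h) with h0 | h0
        · rw [← h0, hρ₂0]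
          simp
        · rw [Real.norm_eq_abs, abs_of_nonneg (hρ₂_nonneg _ (norm_nonneg h))]
          calc ρ₂ ‖h‖ ≤ ρ (4 * ‖h‖) := hρ₂_ub _ h0
          _ ≤ c/4 * (4 * ‖h‖) := hδp _ (by positivity) (by linarith)
          _ = c * ‖h‖ := by ring
      have := hg.sub (hlin' xb)
      rw [zero_sub] at this; exact this
    · have htpos : 0 < ‖x - xb‖ := norm_pos_iff.mpr (sub_ne_zero.mpr hx)
      have hcomp := (hρ₂_deriv (‖x - xb‖) htpos.ne').comp_hasFDerivAt x (hnorm_deriv x hx)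
      have := hcomp.sub (hlin' x)
      exact this
  have hnf : Continuous fun x : Euc n => ‖x - xb‖ := (continuous_id.sub continuous_const).norm
  have hφcont : Continuous φ := by
    rw [continuous_iff_continuousAt]
    intro x
    rcases eq_or_ne x xb with hxeq | hx
    · rw [hxeq, Metric.continuousAt_iff]
      intro ε hε
      obtain ⟨δ, hδ, hδp⟩ := hdρ_small (ε/2) (by positivity)
      refine ⟨δ, hδ, fun {y} hy => ?_⟩
      rw [dist_eq_norm] at hy ⊢
      have hAy : φ y - φ xb = A y := by
        rw [hφxb]
        show A y - ξ - (-ξ) = A y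
        abel
      rw [hAy]
      rcases eq_or_ne y xb with hyeq | hyx
      · rw [hyeq, hAxb]; simpa using hε
      · have htpos : 0 < ‖y - xb‖ := norm_pos_iff.mpr (sub_ne_zero.mpr hyx)
        have hval : ‖A y‖ = |dρ (‖y - xb‖)| := by
          show ‖dρ (‖y - xb‖) • ((‖y - xb‖)⁻¹ • (innerSL ℝ (y - xb)))‖ = |dρ (‖y - xb‖)|
          rw [norm_smul (dρ (‖y - xb‖)) ((‖y - xb‖)⁻¹ • (innerSL ℝ (y - xb))),
            norm_smul ((‖y - xb‖)⁻¹) (innerSL ℝ (y - xb)), innerSL_apply_norm,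
            Real.norm_eq_abs, Real.norm_eq_abs, abs_of_pos (inv_pos.mpr htpos),
            inv_mul_cancel₀ htpos.ne', mul_one]
        rw [hval]
        have := hδp (‖y - xb‖) htpos hy
        linarith
    · have htne : ‖x - xb‖ ≠ 0 := (norm_pos_iff.mpr (sub_ne_zero.mpr hx)).ne'
      have hnum : Continuous fun t : ℝ =>
          ((ρ₁ (2*t) * 2 - ρ₁ t) * t - (H₁ (2*t) - H₁ t) * 1) := by
        apply Continuous.sub
        · exact (((hρ₁_cont.comp (continuous_const.mul continuous_id)).mul
            continuous_const).sub hρ₁_cont).mul continuous_id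
        · exact ((hH₁_cont.comp (continuous_const.mul continuous_id)).sub hH₁_cont).mul
            continuous_const
      have hdρ_contAt : ContinuousAt dρ (‖x - xb‖) := by
        rw [hdρdef]
        exact ContinuousAt.div hnum.continuousAt ((continuous_pow 2).continuousAt)
          (pow_ne_zero 2 htne)
      have hAcont : ContinuousAt A x := by
        rw [hAdef]
        apply ContinuousAt.fun_smul
        · exact ContinuousAt.comp (f := fun z : Euc n => ‖z - xb‖) hdρ_contAt
            hnf.continuousAt
        · apply ContinuousAt.fun_smul
          · exact (hnf.continuousAt).inv₀ htne
          · exact ((innerSL ℝ).continuous.comp (continuous_id.sub continuous_const)).continuousAt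
      exact hAcont.sub continuousAt_const
  refine ⟨fun z => ρ₂ ‖z - xb‖ - ξ (z - xb), ?_, ?_, ?_⟩
  · rw [contDiff_one_iff_fderiv]
    refine ⟨fun x => (hfd x).differentiableAt, ?_⟩
    have : (fderiv ℝ fun z : Euc n => ρ₂ ‖z - xb‖ - ξ (z - xb)) = φ :=
      funext fun x => (hfd x).fderiv
    rw [this]
    exact hφcont
  · intro y hy
    show ρ₂ ‖xb - xb‖ - ξ (xb - xb) ≤ ρ₂ ‖y - xb‖ - ξ (y - xb)
    have hxb0 : ρ₂ ‖xb - xb‖ - ξ (xb - xb) = 0 := by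
      rw [sub_self, norm_zero, hρ₂0]
      simp
    rw [hxb0]
    rcases eq_or_ne y xb with hyeq | hyx
    · rw [hyeq, hxb0]
    · have htpos : 0 < ‖y - xb‖ := norm_pos_iff.mpr (sub_ne_zero.mpr hyx)
      have h1 : ξ (y - xb) ≤ ρ ‖y - xb‖ := hρ_ge y hy
      have h2 : ρ ‖y - xb‖ ≤ ρ₂ ‖y - xb‖ := hρ₂_ge _ htpos
      linarith
  · rw [(hfd xb).fderiv, hφxb]

end Variational

/-- Proposition 3.10: if every C¹ objective having `x̄` as local minimizer makes
`x̄` extended M-stationary, then GGCQ holds at `x̄`. -/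
theorem stmt10 {n m : ℕ}
    (F : Euc n → Euc m) (hF : ContDiff ℝ 1 F)
    (Ω : Set (Euc m)) (hΩ : IsFinUnionPolyhedra Ω)
    (xb : Euc n) (hfeas : F xb ∈ Ω)
    (hyp : ∀ f : Euc n → ℝ, ContDiff ℝ 1 f →
      IsLocalMinOn f {x | F x ∈ Ω} xb →
      ∀ u : Euc n, fderiv ℝ F xb u ∈ tcone Ω (F xb) → fderiv ℝ f xb u ≤ 0 →
        ∃ μ : Euc m →L[ℝ] ℝ, μ ∈ dlnc Ω (F xb) (fderiv ℝ F xb u) ∧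
          fderiv ℝ f xb + μ.comp (fderiv ℝ F xb) = 0) :
    fnc {x | F x ∈ Ω} xb = fnc {u : Euc n | fderiv ℝ F xb u ∈ tcone Ω (F xb)} 0 := by
  set A : Euc n →L[ℝ] Euc m := fderiv ℝ F xb with hAdef
  set Tlin : Set (Euc n) := {u : Euc n | A u ∈ tcone Ω (F xb)} with hTdef
  have h0T : (0 : Euc n) ∈ Tlin := by
    show A 0 ∈ tcone Ω (F xb)
    rw [map_zero]
    refine ⟨hfeas, fun k => 1 / (k + 1 : ℝ), fun _ => 0, fun k => by positivity,
      tendsto_one_div_add_atTop_nhds_zero_nat, tendsto_const_nhds, fun k => by simpa using hfeas⟩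
  have hconeT : ∀ u ∈ Tlin, ∀ s : ℝ, 0 < s → s • u ∈ Tlin := by
    intro u hu s hs
    show A (s • u) ∈ tcone Ω (F xb)
    rw [map_smul]
    exact tcone_smul_mem hu hs
  ext ξ
  constructor
  · intro hξ
    apply mem_fnc_zero_of_nonpos h0T
    intro u hu
    by_contra hpos
    push_neg at hpos
    obtain ⟨f, hf1, hf2, hf3⟩ := smooth_variational hξ
    have hmin : IsLocalMinOn f {x | F x ∈ Ω} xb := eventually_nhdsWithin_of_forall hf2
    have hder : fderiv ℝ f xb u ≤ 0 := by
      rw [hf3]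
      simp only [ContinuousLinearMap.neg_apply]
      linarith
    obtain ⟨μ, hμ, heq⟩ := hyp f hf1 hmin u hu hder
    rw [hf3] at heq
    have hcomp : μ.comp (fderiv ℝ F xb) = ξ := by
      have h := neg_add_eq_zero.mp heq
      exact h.symm
    have h1 : μ (fderiv ℝ F xb u) ≤ 0 := dlnc_nonpos hΩ hμ
    have h2 : μ (fderiv ℝ F xb u) = ξ u := by
      rw [← hcomp]; rfl
    rw [h2] at h1
    linarith
  · intro hξ
    refine ⟨hfeas, ?_⟩
    by_contra hcon
    push_neg at hcon
    obtain ⟨ε, hε, hcon⟩ := hcon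
    set Fs : Set (Euc n) := {x | F x ∈ Ω} with hFs
    have hseq : ∀ k : ℕ, ∃ y : Euc n, y ∈ Fs ∧ ‖y - xb‖ < 1 / (k + 1 : ℝ) ∧
        ε * ‖y - xb‖ < ξ (y - xb) := by
      intro k
      obtain ⟨y, hy1, hy2, hy3⟩ := hcon (1 / (k + 1 : ℝ)) (by positivity)
      exact ⟨y, hy1, hy2, hy3⟩
    set y : ℕ → Euc n := fun k => (hseq k).choose with hydef
    have hyF : ∀ k, y k ∈ Fs := fun k => (hseq k).choose_spec.1
    have hylt : ∀ k, ‖y k - xb‖ < 1 / (k + 1 : ℝ) := fun k => (hseq k).choose_spec.2.1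
    have hygt : ∀ k, ε * ‖y k - xb‖ < ξ (y k - xb) := fun k => (hseq k).choose_spec.2.2
    have hyne : ∀ k, (0:ℝ) < ‖y k - xb‖ := by
      intro k
      rcases eq_or_lt_of_le (norm_nonneg (y k - xb)) with h0 | h0
      · exfalso
        have h1 := hygt k
        have h2 : y k - xb = 0 := by
          have := norm_eq_zero.mp h0.symm
          exact this
        rw [h2] at h1
        simp at h1
      · exact h0
    set t : ℕ → ℝ := fun k => ‖y k - xb‖ with htdef
    have ht0 : Tendsto t atTop (𝓝 0) :=
      squeeze_zero (fun k => (hyne k).le) (fun k => (hylt k).le)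
        tendsto_one_div_add_atTop_nhds_zero_nat
    set u : ℕ → Euc n := fun k => (t k)⁻¹ • (y k - xb) with hudef
    have husphere : ∀ k, u k ∈ Metric.sphere (0 : Euc n) 1 := by
      intro k
      rw [mem_sphere_iff_norm, sub_zero, hudef]
      simp only
      rw [norm_smul, Real.norm_eq_abs, abs_of_pos (inv_pos.mpr (hyne k))]
      exact inv_mul_cancel₀ (hyne k).ne'
    obtain ⟨v, hvS, φ, hφmono, hvconv⟩ :=
      (isCompact_sphere (0 : Euc n) 1).tendsto_subseq husphere
    have htφ : Tendsto (fun k => t (φ k)) atTop (𝓝 0) := ht0.comp hφmono.tendsto_atTop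
    have hyx : Tendsto (fun k => y (φ k)) atTop (𝓝 xb) := by
      rw [tendsto_iff_norm_sub_tendsto_zero]
      exact htφ
    have hFd : HasFDerivAt F A xb := (hF.differentiable one_ne_zero xb).hasFDerivAt
    have hlo := hFd.isLittleO.comp_tendsto hyx
    set w : ℕ → Euc m := fun k => (t (φ k))⁻¹ • (F (y (φ k)) - F xb) with hwdef
    have hwsub : ∀ k, w k - A (u (φ k)) =
        (t (φ k))⁻¹ • (F (y (φ k)) - F xb - A (y (φ k) - xb)) := by
      intro k
      rw [hwdef, hudef]
      simp only [map_smul]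
      module
    have hto : Tendsto (fun k => w k - A (u (φ k))) atTop (𝓝 0) := by
      rw [tendsto_zero_iff_norm_tendsto_zero]
      rw [NormedAddCommGroup.tendsto_nhds_zero]
      intro δ hδ
      have hsmall := (Asymptotics.isLittleO_iff.mp hlo) (c := δ/2) (by positivity)
      filter_upwards [hsmall] with k hk
      rw [Real.norm_eq_abs, abs_of_nonneg (norm_nonneg _), hwsub k, norm_smul,
        Real.norm_eq_abs, abs_of_pos (inv_pos.mpr (hyne (φ k)))]
      show (t (φ k))⁻¹ * ‖F (y (φ k)) - F xb - A (y (φ k) - xb)‖ < δ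
      simp only [Function.comp_apply] at hk
      have hnorm : ‖y (φ k) - xb‖ = t (φ k) := rfl
      rw [hnorm] at hk
      calc (t (φ k))⁻¹ * ‖F (y (φ k)) - F xb - A (y (φ k) - xb)‖
          ≤ (t (φ k))⁻¹ * (δ/2 * t (φ k)) := by
            apply mul_le_mul_of_nonneg_left hk (inv_pos.mpr (hyne (φ k))).le
      _ = δ/2 := by
            field_simp [(hyne (φ k)).ne']
            exact div_self (hyne (φ k)).ne'
      _ < δ := by linarith
    have hw : Tendsto w atTop (𝓝 (A v)) := by
      have hAu : Tendsto (fun k => A (u (φ k))) atTop (𝓝 (A v)) :=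
        (A.continuous.tendsto v).comp hvconv
      have := hto.add hAu
      rw [zero_add] at this
      convert this using 2 with k
      abel
    have hvT : v ∈ Tlin := by
      show A v ∈ tcone Ω (F xb)
      refine ⟨hfeas, fun k => t (φ k), w, fun k => hyne (φ k), htφ, hw, ?_⟩
      intro k
      have hsm : t (φ k) • w k = F (y (φ k)) - F xb := by
        rw [hwdef]
        simp only
        rw [smul_smul, mul_inv_cancel₀ (hyne (φ k)).ne', one_smul]
      rw [hsm]
      have : F xb + (F (y (φ k)) - F xb) = F (y (φ k)) := by abel
      rw [this]
      exact hyF (φ k)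
    have hle : ξ v ≤ 0 := nonpos_of_mem_fnc_zero hconeT hξ hvT
    have hge : ε ≤ ξ v := by
      have hev : ∀ k, ε ≤ ξ (u (φ k)) := by
        intro k
        have h1 := hygt (φ k)
        have h2 : ξ (u (φ k)) = (t (φ k))⁻¹ * ξ (y (φ k) - xb) := by
          rw [hudef]
          simp only [map_smul, smul_eq_mul]
        rw [h2]
        calc ε = (t (φ k))⁻¹ * (ε * t (φ k)) :=
            (eq_inv_mul_iff_mul_eq₀ (hyne (φ k)).ne').mpr (by ring)
        _ ≤ (t (φ k))⁻¹ * ξ (y (φ k) - xb) :=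
            mul_le_mul_of_nonneg_left h1.le (inv_pos.mpr (hyne (φ k))).le
      exact ge_of_tendsto' ((ξ.continuous.tendsto v).comp hvconv) fun k => hev k
    linarith
end
end

section
/- Let x̄ be feasible for the constraint system F(x) ∈ Ω. If the weak directional metric subregularity constraint qualification WDMSCQ holds at x̄, then the generalized Guignard constraint qualification GGCQ holds at x̄, i.e. N̂(x̄;𝓕) = N̂(0; T_lin(x̄)). -/
noncomputable section

open Filter Topology Set
set_option linter.unusedSectionVars false

variable {E : Type*} [NormedAddCommGroup E] [NormedSpace ℝ E]
variable {Y : Type*} [NormedAddCommGroup Y] [NormedSpace ℝ Y]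

lemma closed_of_finUnionPolyhedra {Ω : Set E} (h : IsFinUnionPolyhedra Ω) : IsClosed Ω := by
  obtain ⟨p, P, hP, rfl⟩ := h
  refine isClosed_iUnion_of_finite fun i => ?_
  obtain ⟨k, a, b, hPi⟩ := hP i
  rw [hPi]
  have : {x : E | ∀ j, a j x ≤ b j} = ⋂ j, (a j) ⁻¹' Iic (b j) := by
    ext x; simp [Set.mem_iInter]
  rw [this]
  exact isClosed_iInter fun j => (isClosed_Iic).preimage (a j).continuous

lemma infEdist_cmap (F : E → Y) (Ω : Set Y) (x : E) :
    EMetric.infEdist 0 (cmap F Ω x) = EMetric.infEdist (F x) Ω := by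
  have hiso : Isometry (fun w : Y => F x - w) := by
    intro a b
    simp only [edist_dist, dist_eq_norm, sub_sub_sub_cancel_left]
    rw [norm_sub_rev]
  have himg : cmap F Ω x = (fun w : Y => F x - w) '' Ω := by
    ext y
    constructor
    · intro hy; exact ⟨F x - y, hy, by simp⟩
    · rintro ⟨w, hw, rfl⟩; simpa [cmap] using hw
  have h0 : (0 : Y) = (fun w : Y => F x - w) (F x) := by simp
  rw [himg, h0]
  exact EMetric.infEdist_image hiso

lemma tcone_smul {Ω : Set E} {x : E} {v : E} (hv : v ∈ tcone Ω x) {c : ℝ} (hc : 0 < c) :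
    c • v ∈ tcone Ω x := by
  obtain ⟨hx, t, w, ht, ht0, hw, hmem⟩ := hv
  refine ⟨hx, fun k => t k / c, fun k => c • w k, fun k => div_pos (ht k) hc, ?_, ?_, ?_⟩
  · simpa using ht0.div_const c
  · exact hw.const_smul c
  · intro k
    have : (t k / c) • (c • w k) = t k • w k := by
      rw [smul_smul, div_mul_cancel₀ _ hc.ne']
    rw [this]; exact hmem k

lemma tcone_zero {Ω : Set E} {x : E} (hx : x ∈ Ω) : (0 : E) ∈ tcone Ω x := by
  refine ⟨hx, fun k => 1 / (k + 1 : ℝ), fun _ => 0, fun k => by positivity, ?_, tendsto_const_nhds, fun k => by simpa using hx⟩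
  exact tendsto_one_div_add_atTop_nhds_zero_nat

lemma fnc_cone_nonpos {C : Set E} (hC : ∀ u ∈ C, ∀ c : ℝ, 0 < c → c • u ∈ C)
    {ξ : E →L[ℝ] ℝ} (hξ : ξ ∈ fnc C 0) {u : E} (hu : u ∈ C) : ξ u ≤ 0 := by
  by_contra h
  push_neg at h
  have hu0 : u ≠ 0 := by rintro rfl; simp at h
  have hnu : (0 : ℝ) < ‖u‖ := norm_pos_iff.mpr hu0
  obtain ⟨-, h2⟩ := hξ
  obtain ⟨δ, hδ, h3⟩ := h2 (ξ u / (2 * ‖u‖)) (by positivity)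
  set c : ℝ := δ / (2 * ‖u‖) with hc
  have hcpos : 0 < c := by positivity
  have hy : c • u ∈ C := hC u hu c hcpos
  have hnorm : ‖c • u - 0‖ = c * ‖u‖ := by
    rw [sub_zero, norm_smul, Real.norm_eq_abs, abs_of_pos hcpos]
  have hlt : ‖c • u - 0‖ < δ := by
    rw [hnorm, hc]; rw [div_mul_eq_mul_div, mul_comm]
    rw [mul_div_assoc]
    have : ‖u‖ * (δ / (2 * ‖u‖)) = δ / 2 := by field_simp
    linarith
  have := h3 (c • u) hy hlt
  rw [hnorm] at this
  have hξc : ξ (c • u - 0) = c * ξ u := by simp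
  rw [hξc] at this
  have : c * ξ u ≤ ξ u / (2 * ‖u‖) * (c * ‖u‖) := this
  have heq : ξ u / (2 * ‖u‖) * (c * ‖u‖) = c * ξ u / 2 := by
    field_simp
  rw [heq] at this
  nlinarith

lemma key_nonpos {n m : ℕ} (F : Euc n → Euc m) (hF : ContDiff ℝ 1 F) (Ω : Set (Euc m))
    (hclosed : IsClosed Ω) (xb : Euc n) (hfeas : F xb ∈ Ω)
    (ξ : Euc n →L[ℝ] ℝ) (hξ : ξ ∈ fnc {x | F x ∈ Ω} xb)
    (u : Euc n) (hu : fderiv ℝ F xb u ∈ tcone Ω (F xb))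
    (hsub : SubregDir (cmap F Ω) xb 0 u) : ξ u ≤ 0 := by
  rcases eq_or_ne u 0 with rfl | hu0
  · simp
  have hnu : (0 : ℝ) < ‖u‖ := norm_pos_iff.mpr hu0
  set A := fderiv ℝ F xb with hA
  set 𝓕 : Set (Euc n) := {x | F x ∈ Ω} with h𝓕
  have h𝓕closed : IsClosed 𝓕 := hclosed.preimage hF.continuous
  have h𝓕ne : 𝓕.Nonempty := ⟨xb, hfeas⟩
  obtain ⟨-, tk, vk, htk, htk0, hvk, hvkmem⟩ := hu
  obtain ⟨-, ρ, hρ, δ, hδ, κ, hκ, hsub'⟩ := hsub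
  -- the inverse image set is 𝓕
  have hinv : {z | (0 : Euc m) ∈ cmap F Ω z} = 𝓕 := by
    ext z; simp [cmap, h𝓕]
  -- derivative along the ray
  have hderiv : HasDerivAt (fun t : ℝ => F (xb + t • u)) (A u) 0 := by
    have h1 : HasDerivAt (fun t : ℝ => xb + t • u) u 0 := by
      simpa using ((hasDerivAt_id (0:ℝ)).smul_const u).const_add xb
    have h2 : HasFDerivAt F A (xb + (0:ℝ) • u) := by
      simpa using (hF.differentiable one_ne_zero xb).hasFDerivAt
    exact h2.comp_hasDerivAt 0 h1
  -- s k := the little-o remainder divided by t k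
  set g : ℝ → Euc m := fun t => F (xb + t • u) with hg
  have hslope : Tendsto (fun k => (tk k)⁻¹ • (g (tk k) - g 0)) atTop (𝓝 (A u)) := by
    have := hasDerivAt_iff_tendsto_slope.mp hderiv
    have htk' : Tendsto tk atTop (𝓝[≠] (0:ℝ)) :=
      tendsto_nhdsWithin_of_tendsto_nhds_of_eventually_within tk htk0
        (Eventually.of_forall fun k => (htk k).ne')
    have := this.comp htk'
    have heq : (slope g 0 ∘ tk) = fun k => (tk k)⁻¹ • (g (tk k) - g 0) := by
      funext k; rw [Function.comp_apply, slope_def_module]; simp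
    rw [← heq]; exact this
  set sk : ℕ → Euc m := fun k => (tk k)⁻¹ • (g (tk k) - g 0) - vk k with hsk
  have hsk0 : Tendsto sk atTop (𝓝 0) := by
    simpa using hslope.sub hvk
  -- choose nearest points in 𝓕
  have hxk : ∀ k : ℕ, ∃ y ∈ 𝓕, Metric.infDist (xb + tk k • u) 𝓕 = dist (xb + tk k • u) y :=
    fun k => h𝓕closed.exists_infDist_eq_dist h𝓕ne _
  choose x hx hxd using hxk
  -- eventually, the distance bound holds
  have hbound : ∀ᶠ k in atTop, dist (xb + tk k • u) (x k) ≤ κ * (tk k * ‖sk k‖) := by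
    have hsmall : ∀ᶠ k in atTop, tk k ≤ ρ / ‖u‖ := by
      have := htk0.eventually (eventually_le_nhds (show (0:ℝ) < ρ / ‖u‖ by positivity))
      exact this
    filter_upwards [hsmall] with k hk
    have hzmem : tk k • u ∈ dirNbhd u ρ δ := by
      constructor
      · rw [norm_smul, Real.norm_eq_abs, abs_of_pos (htk k)]
        calc tk k * ‖u‖ ≤ (ρ / ‖u‖) * ‖u‖ := by
              exact mul_le_mul_of_nonneg_right hk (norm_nonneg u)
          _ = ρ := by field_simp
      · have : ‖u‖ • (tk k • u) - ‖tk k • u‖ • u = 0 := by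
          rw [norm_smul, Real.norm_eq_abs, abs_of_pos (htk k), smul_smul, mul_smul]
          module
        rw [this, norm_zero]
        positivity
    have h1 := hsub' (tk k • u) hzmem
    rw [hinv, infEdist_cmap] at h1
    have h2 : EMetric.infEdist (F (xb + tk k • u)) Ω ≤ ENNReal.ofReal (tk k * ‖sk k‖) := by
      have hmem := hvkmem k
      have hedist : edist (F (xb + tk k • u)) (F xb + tk k • vk k) =
          ENNReal.ofReal (tk k * ‖sk k‖) := by
        rw [edist_dist, dist_eq_norm]
        congr 1
        have hg0 : g 0 = F xb := by simp [hg]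
        have : F (xb + tk k • u) - (F xb + tk k • vk k) = tk k • sk k := by
          rw [hsk, smul_sub, smul_smul, mul_inv_cancel₀ (htk k).ne', one_smul, hg0]
          simp [hg]
          abel
        rw [this, norm_smul, Real.norm_eq_abs, abs_of_pos (htk k)]
      rw [← hedist]
      exact EMetric.infEdist_le_edist_of_mem hmem
    have h3 : EMetric.infEdist (xb + tk k • u) 𝓕 ≤ ENNReal.ofReal (κ * (tk k * ‖sk k‖)) := by
      calc EMetric.infEdist (xb + tk k • u) 𝓕
          ≤ ENNReal.ofReal κ * EMetric.infEdist (F (xb + tk k • u)) Ω := h1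
        _ ≤ ENNReal.ofReal κ * ENNReal.ofReal (tk k * ‖sk k‖) := by
            exact mul_le_mul_right h2 _
        _ = ENNReal.ofReal (κ * (tk k * ‖sk k‖)) := by
            rw [← ENNReal.ofReal_mul hκ.le]
    rw [← hxd k]
    have hfin : EMetric.infEdist (xb + tk k • u) 𝓕 ≠ ⊤ :=
      ne_top_of_le_ne_top ENNReal.ofReal_ne_top h3
    have := ENNReal.toReal_le_toReal hfin ENNReal.ofReal_ne_top |>.mpr h3
    rwa [ENNReal.toReal_ofReal
      (mul_nonneg hκ.le (mul_nonneg (htk k).le (norm_nonneg _)))] at this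
  -- the ε-argument
  have hmain : ∀ ε : ℝ, 0 < ε → ξ u ≤ ε * ‖u‖ := by
    intro ε hε
    obtain ⟨-, hξ2⟩ := hξ
    obtain ⟨δ', hδ', hξ3⟩ := hξ2 ε hε
    have hbnd0 : Tendsto (fun k => κ * (tk k * ‖sk k‖) + tk k * ‖u‖) atTop (𝓝 0) := by
      have h1 : Tendsto (fun k => ‖sk k‖) atTop (𝓝 0) := by
        simpa using hsk0.norm
      have := ((htk0.mul h1).const_mul κ).add (htk0.mul_const ‖u‖)
      simpa using this
    have hnear : ∀ᶠ k in atTop, ‖x k - xb‖ < δ' := by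
      have hev := hbnd0.eventually (eventually_lt_nhds hδ')
      filter_upwards [hbound, hev] with k hb hlt
      calc ‖x k - xb‖ ≤ ‖x k - (xb + tk k • u)‖ + ‖tk k • u‖ := by
            have : x k - xb = (x k - (xb + tk k • u)) + tk k • u := by abel
            rw [this]; exact norm_add_le _ _
        _ ≤ κ * (tk k * ‖sk k‖) + tk k * ‖u‖ := by
            rw [norm_smul, Real.norm_eq_abs, abs_of_pos (htk k)]
            have : ‖x k - (xb + tk k • u)‖ = dist (xb + tk k • u) (x k) := by
              rw [dist_eq_norm, norm_sub_rev]
            linarith [hb, this.le, this.ge]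
        _ < δ' := hlt
    have hfinal : ∀ᶠ k in atTop,
        ξ u ≤ ε * (κ * ‖sk k‖ + ‖u‖) + ‖ξ‖ * (κ * ‖sk k‖) := by
      filter_upwards [hbound, hnear] with k hb hn
      have hdk : ‖x k - (xb + tk k • u)‖ ≤ κ * (tk k * ‖sk k‖) := by
        have : ‖x k - (xb + tk k • u)‖ = dist (xb + tk k • u) (x k) := by
          rw [dist_eq_norm, norm_sub_rev]
        linarith [hb]
      have hfnc := hξ3 (x k) (hx k) hn
      have hxb : ‖x k - xb‖ ≤ κ * (tk k * ‖sk k‖) + tk k * ‖u‖ := by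
        calc ‖x k - xb‖ ≤ ‖x k - (xb + tk k • u)‖ + ‖tk k • u‖ := by
              have : x k - xb = (x k - (xb + tk k • u)) + tk k • u := by abel
              rw [this]; exact norm_add_le _ _
          _ ≤ κ * (tk k * ‖sk k‖) + tk k * ‖u‖ := by
              rw [norm_smul, Real.norm_eq_abs, abs_of_pos (htk k)]
              linarith
      have hsplit : tk k * ξ u = ξ (x k - xb) - ξ (x k - (xb + tk k • u)) := by
        rw [← map_sub]
        have : x k - xb - (x k - (xb + tk k • u)) = tk k • u := by abel
        rw [this, map_smul, smul_eq_mul]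
      have hop : ξ (x k - (xb + tk k • u)) ≥ -(‖ξ‖ * (κ * (tk k * ‖sk k‖))) := by
        have h1 : |ξ (x k - (xb + tk k • u))| ≤ ‖ξ‖ * ‖x k - (xb + tk k • u)‖ := by
          simpa using ξ.le_opNorm (x k - (xb + tk k • u))
        have h2 : ‖ξ‖ * ‖x k - (xb + tk k • u)‖ ≤ ‖ξ‖ * (κ * (tk k * ‖sk k‖)) :=
          mul_le_mul_of_nonneg_left hdk (norm_nonneg ξ)
        have := neg_abs_le (ξ (x k - (xb + tk k • u)))
        linarith
      have hstep : tk k * ξ u ≤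
          ε * (κ * (tk k * ‖sk k‖) + tk k * ‖u‖) + ‖ξ‖ * (κ * (tk k * ‖sk k‖)) := by
        have h1 : ξ (x k - xb) ≤ ε * ‖x k - xb‖ := hfnc
        have h2 : ε * ‖x k - xb‖ ≤ ε * (κ * (tk k * ‖sk k‖) + tk k * ‖u‖) :=
          mul_le_mul_of_nonneg_left hxb hε.le
        linarith [hsplit, hop]
      have hrw : ε * (κ * (tk k * ‖sk k‖) + tk k * ‖u‖) + ‖ξ‖ * (κ * (tk k * ‖sk k‖))
          = tk k * (ε * (κ * ‖sk k‖ + ‖u‖) + ‖ξ‖ * (κ * ‖sk k‖)) := by ring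
      rw [hrw] at hstep
      exact le_of_mul_le_mul_left (by linarith [hstep]) (htk k)
    have hlim : Tendsto (fun k => ε * (κ * ‖sk k‖ + ‖u‖) + ‖ξ‖ * (κ * ‖sk k‖))
        atTop (𝓝 (ε * ‖u‖)) := by
      have h1 : Tendsto (fun k => ‖sk k‖) atTop (𝓝 0) := by simpa using hsk0.norm
      have := ((h1.const_mul κ).add_const ‖u‖ |>.const_mul ε).add
        ((h1.const_mul κ).const_mul ‖ξ‖)
      simpa using this
    exact ge_of_tendsto hlim hfinal
  by_contra hcon
  push_neg at hcon
  have := hmain (ξ u / (2 * ‖u‖)) (by positivity)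
  have heq : ξ u / (2 * ‖u‖) * ‖u‖ = ξ u / 2 := by field_simp
  rw [heq] at this
  linarith

lemma back_mem {n m : ℕ} (F : Euc n → Euc m) (hF : ContDiff ℝ 1 F) (Ω : Set (Euc m))
    (xb : Euc n) (hfeas : F xb ∈ Ω) (ξ : Euc n →L[ℝ] ℝ)
    (hpol : ∀ w : Euc n, fderiv ℝ F xb w ∈ tcone Ω (F xb) → ξ w ≤ 0) :
    ξ ∈ fnc {x | F x ∈ Ω} xb := by
  set A := fderiv ℝ F xb with hA
  refine ⟨hfeas, ?_⟩
  by_contra hcon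
  push_neg at hcon
  obtain ⟨ε, hε, hcon⟩ := hcon
  have hpick : ∀ k : ℕ, ∃ y : Euc n, y ∈ {x | F x ∈ Ω} ∧ ‖y - xb‖ < 1 / (k + 1 : ℝ) ∧
      ε * ‖y - xb‖ < ξ (y - xb) := by
    intro k
    obtain ⟨y, hy1, hy2, hy3⟩ := hcon (1 / (k + 1 : ℝ)) (by positivity)
    exact ⟨y, hy1, hy2, hy3⟩
  choose y hy1 hy2 hy3 using hpick
  set t : ℕ → ℝ := fun k => ‖y k - xb‖ with ht
  have htpos : ∀ k, 0 < t k := by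
    intro k
    rcases (norm_nonneg (y k - xb)).lt_or_eq with h | h
    · exact h
    · exfalso
      have h0 : y k - xb = 0 := by rwa [eq_comm, norm_eq_zero] at h
      have := hy3 k
      rw [h0] at this
      simp at this
  have ht0 : Tendsto t atTop (𝓝 0) := by
    refine squeeze_zero (fun k => (htpos k).le) (fun k => (hy2 k).le) ?_
    exact tendsto_one_div_add_atTop_nhds_zero_nat
  set w : ℕ → Euc n := fun k => (t k)⁻¹ • (y k - xb) with hw
  have hwnorm : ∀ k, w k ∈ Metric.sphere (0 : Euc n) 1 := by
    intro k
    simp only [Metric.mem_sphere, dist_zero_right, hw, norm_smul, Real.norm_eq_abs,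
      abs_of_pos (inv_pos.mpr (htpos k))]
    rw [inv_mul_cancel₀ (htpos k).ne']
  obtain ⟨a, ha, φ, hφ, hwφ⟩ := tendsto_subseq_of_bounded Metric.isBounded_sphere hwnorm
  have hyx : ∀ k, y k - xb = t k • w k := by
    intro k
    rw [hw, smul_smul, mul_inv_cancel₀ (htpos k).ne', one_smul]
  have hφtop : Tendsto φ atTop atTop := hφ.tendsto_atTop
  have htφ : Tendsto (t ∘ φ) atTop (𝓝 0) := ht0.comp hφtop
  have hyφ : Tendsto (fun k => y (φ k)) atTop (𝓝 xb) := by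
    rw [tendsto_iff_norm_sub_tendsto_zero]
    have : Tendsto (fun k => ‖y k - xb‖) atTop (𝓝 0) := ht0
    exact (this.comp hφtop)
  -- a ∈ T_lin
  have hTlin : A a ∈ tcone Ω (F xb) := by
    have hdiff : HasFDerivAt F A xb := (hF.differentiable one_ne_zero xb).hasFDerivAt
    have ho : (fun x => F x - F xb - A (x - xb)) =o[𝓝 xb] (fun x => x - xb) :=
      hdiff.isLittleO
    have ho2 : (fun k => F (y (φ k)) - F xb - A (y (φ k) - xb)) =o[atTop]
        (fun k => y (φ k) - xb) := ho.comp_tendsto hyφ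
    have ho3 : (fun k => ‖F (y (φ k)) - F xb - A (y (φ k) - xb)‖) =o[atTop]
        (fun k => t (φ k)) := by
      simpa [ht] using ho2.norm_norm
    have hratio : Tendsto (fun k => ‖F (y (φ k)) - F xb - A (y (φ k) - xb)‖ / t (φ k))
        atTop (𝓝 0) := ho3.tendsto_div_nhds_zero
    set v : ℕ → Euc m := fun k => (t (φ k))⁻¹ • (F (y (φ k)) - F xb) with hv
    have hvlim : Tendsto v atTop (𝓝 (A a)) := by
      have hdecomp : ∀ k, v k = (t (φ k))⁻¹ • (F (y (φ k)) - F xb - A (y (φ k) - xb))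
          + A (w (φ k)) := by
        intro k
        rw [hv]
        simp only [smul_sub]
        have : (t (φ k))⁻¹ • A (y (φ k) - xb) = A (w (φ k)) := by
          rw [← map_smul]
        rw [this]
        abel
      have h1 : Tendsto (fun k => (t (φ k))⁻¹ •
          (F (y (φ k)) - F xb - A (y (φ k) - xb))) atTop (𝓝 0) := by
        rw [tendsto_zero_iff_norm_tendsto_zero]
        refine hratio.congr fun k => ?_
        rw [norm_smul, Real.norm_eq_abs, abs_of_pos (inv_pos.mpr (htpos (φ k))),
          inv_mul_eq_div]
      have h2 : Tendsto (fun k => A (w (φ k))) atTop (𝓝 (A a)) :=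
        (A.continuous.tendsto a).comp hwφ
      have := h1.add h2
      rw [zero_add] at this
      exact this.congr fun k => (hdecomp k).symm
    refine ⟨hfeas, fun k => t (φ k), v, fun k => htpos (φ k), htφ, hvlim, ?_⟩
    intro k
    have : t (φ k) • v k = F (y (φ k)) - F xb := by
      rw [hv, smul_smul, mul_inv_cancel₀ (htpos (φ k)).ne', one_smul]
    rw [this]
    simpa using hy1 (φ k)
  have hξa : ξ a ≤ 0 := hpol a hTlin
  -- but ξ (w k) > ε
  have hξw : ∀ k, ε < ξ (w k) := by
    intro k
    have h := hy3 k
    rw [hyx k, map_smul, smul_eq_mul] at h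
    have hw1 : ‖w k‖ = 1 := by
      have := hwnorm k
      simpa [Metric.mem_sphere, dist_zero_right] using this
    rw [norm_smul, Real.norm_eq_abs, abs_of_pos (htpos k), hw1, mul_one] at h
    nlinarith [htpos k]
  have hlimξ : Tendsto (fun k => ξ (w (φ k))) atTop (𝓝 (ξ a)) :=
    (ξ.continuous.tendsto a).comp hwφ
  have : ε ≤ ξ a := ge_of_tendsto hlimξ (Eventually.of_forall fun k => (hξw (φ k)).le)
  linarith

/-- Proposition 3.12: WDMSCQ implies GGCQ. -/
theorem stmt11 {n m : ℕ}
    (F : Euc n → Euc m) (hF : ContDiff ℝ 1 F)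
    (Ω : Set (Euc m)) (hΩ : IsFinUnionPolyhedra Ω)
    (xb : Euc n) (hfeas : F xb ∈ Ω)
    (hWDMSCQ : ∃ N : ℕ, ∃ uu : Fin N → Euc n,
      (∀ i, fderiv ℝ F xb (uu i) ∈ tcone Ω (F xb)) ∧
      convexHull ℝ {u : Euc n | fderiv ℝ F xb u ∈ tcone Ω (F xb)} =
        {x : Euc n | ∃ α : Fin N → ℝ, (∀ i, 0 ≤ α i) ∧ x = ∑ i, α i • uu i} ∧
      ∀ i, SubregDir (cmap F Ω) xb 0 (uu i)) :
    fnc {x | F x ∈ Ω} xb = fnc {u : Euc n | fderiv ℝ F xb u ∈ tcone Ω (F xb)} 0 := by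
  obtain ⟨N, uu, huu, hconv, hsubr⟩ := hWDMSCQ
  have hclosed : IsClosed Ω := closed_of_finUnionPolyhedra hΩ
  set A := fderiv ℝ F xb with hA
  set Tlin : Set (Euc n) := {u | A u ∈ tcone Ω (F xb)} with hTlin
  have h0mem : (0 : Euc n) ∈ Tlin := by
    show A 0 ∈ tcone Ω (F xb)
    rw [map_zero]
    exact tcone_zero hfeas
  have hcone : ∀ u ∈ Tlin, ∀ c : ℝ, 0 < c → c • u ∈ Tlin := by
    intro u hu c hc
    show A (c • u) ∈ tcone Ω (F xb)
    rw [map_smul]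
    exact tcone_smul hu hc
  ext ξ
  constructor
  · -- forward: needs WDMSCQ
    intro hξ
    have hnonpos : ∀ y ∈ Tlin, ξ y ≤ 0 := by
      intro y hy
      have hych : y ∈ convexHull ℝ Tlin := subset_convexHull ℝ Tlin hy
      rw [hconv] at hych
      obtain ⟨α, hα, rfl⟩ := hych
      rw [map_sum]
      refine Finset.sum_nonpos fun i _ => ?_
      rw [map_smul, smul_eq_mul]
      have hi : ξ (uu i) ≤ 0 :=
        key_nonpos F hF Ω hclosed xb hfeas ξ hξ (uu i) (huu i) (hsubr i)
      exact mul_nonpos_iff.mpr (Or.inl ⟨hα i, hi⟩)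
    refine ⟨h0mem, fun ε hε => ⟨1, one_pos, fun y hy _ => ?_⟩⟩
    rw [sub_zero]
    have h1 : ξ y ≤ 0 := hnonpos y hy
    have h2 : 0 ≤ ε * ‖y‖ := mul_nonneg hε.le (norm_nonneg y)
    linarith
  · -- backward: always holds
    intro hξ
    exact back_mem F hF Ω xb hfeas ξ fun w hw => fnc_cone_nonpos hcone hξ hw
end
end

section
/- Assume x̄ is a local minimizer of the disjunctive program (P) but not an essential local minimizer of second order. Then there exists a twice continuously differentiable function h = (δf, δF) : ℝ^n → ℝ × ℝ^m with h(x̄) = 0, ∇h(x̄) = 0 and ∇²h(x̄) = 0 such that x̄ is not a local minimizer of the perturbed problem min (f + δf)(x) subject to (F + δF)(x) ∈ Ω. -/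
set_option maxHeartbeats 4000000


noncomputable section

open Filter Topology Set

variable {E : Type*} [NormedAddCommGroup E] [NormedSpace ℝ E]
variable {Y : Type*} [NormedAddCommGroup Y] [NormedSpace ℝ Y]

lemma bump_facts {n : ℕ} {Y : Type*} [NormedAddCommGroup Y] [NormedSpace ℝ Y]
    (θ : ContDiffBump (0 : Euc n)) (M₁ M₂ : ℝ)
    (hM₁ : ∀ y, ‖fderiv ℝ (⇑θ) y‖ ≤ M₁) (hM₂ : ∀ y, ‖fderiv ℝ (fderiv ℝ (⇑θ)) y‖ ≤ M₂)
    (ρ : ℝ) (hρ : 0 < ρ) (c : Euc n) (v : Y) :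
    ContDiff ℝ (↑(⊤:ℕ∞)) (fun x : Euc n => θ (ρ⁻¹ • (x - c)) • v) ∧
    (∀ x : Euc n, ‖θ (ρ⁻¹ • (x - c)) • v‖ ≤ ‖v‖) ∧
    (∀ x : Euc n, ‖fderiv ℝ (fun x : Euc n => θ (ρ⁻¹ • (x - c)) • v) x‖ ≤ M₁ * ‖v‖ / ρ) ∧
    (∀ x : Euc n, ‖fderiv ℝ (fderiv ℝ (fun x : Euc n => θ (ρ⁻¹ • (x - c)) • v)) x‖ ≤ M₂ * ‖v‖ / ρ ^ 2) ∧
    (∀ x : Euc n, θ.rOut * ρ ≤ dist x c → θ (ρ⁻¹ • (x - c)) • v = 0) ∧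
    (θ (ρ⁻¹ • (c - c)) • v = v) := by
  have hM₁0 : 0 ≤ M₁ := le_trans (norm_nonneg _) (hM₁ 0)
  have hM₂0 : 0 ≤ M₂ := le_trans (ContinuousLinearMap.opNorm_nonneg _) (hM₂ 0)
  have hρ' : (0:ℝ) ≤ ρ⁻¹ := by positivity
  set L : Euc n →L[ℝ] Euc n := ρ⁻¹ • ContinuousLinearMap.id ℝ (Euc n) with hL
  have hLnorm : ‖L‖ ≤ ρ⁻¹ := by
    apply ContinuousLinearMap.opNorm_le_bound _ hρ'
    intro u
    rw [hL]
    simp only [ContinuousLinearMap.coe_smul', Pi.smul_apply, ContinuousLinearMap.coe_id', id_eq,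
      norm_smul, Real.norm_eq_abs, abs_of_nonneg hρ']
    exact le_rfl
  have hAd : ∀ x : Euc n, HasFDerivAt (fun x : Euc n => ρ⁻¹ • (x - c)) L x := by
    intro x
    exact ((hasFDerivAt_id x).sub_const c).const_smul ρ⁻¹
  have hle1 : (1 : WithTop ℕ∞) ≤ (↑(⊤:ℕ∞)) := WithTop.coe_le_coe.2 le_top
  have hθ : ContDiff ℝ (↑(⊤:ℕ∞)) (⇑θ) := θ.contDiff
  have hθ1 : Differentiable ℝ (⇑θ) := hθ.differentiable (ne_of_gt (lt_of_lt_of_le zero_lt_one hle1))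
  have hθ' : ContDiff ℝ (↑(⊤:ℕ∞)) (fderiv ℝ (⇑θ)) := by
    apply hθ.fderiv_right
    exact_mod_cast le_of_eq (by simp : ((⊤:ℕ∞) + 1) = ⊤)
  have hθ'1 : Differentiable ℝ (fderiv ℝ (⇑θ)) := hθ'.differentiable (ne_of_gt (lt_of_lt_of_le zero_lt_one hle1))
  have hBd : ∀ x : Euc n, HasFDerivAt (fun x : Euc n => θ (ρ⁻¹ • (x - c)) • v)
      (((fderiv ℝ (⇑θ) (ρ⁻¹ • (x - c))).smulRight v).comp L) x := by
    intro x
    exact (((hθ1 _).hasFDerivAt).smul_const v).comp x (hAd x)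
  have hfd : fderiv ℝ (fun x : Euc n => θ (ρ⁻¹ • (x - c)) • v)
      = fun x : Euc n => ((fderiv ℝ (⇑θ) (ρ⁻¹ • (x - c))).smulRight v).comp L :=
    funext fun x => (hBd x).fderiv
  refine ⟨?_, ?_, ?_, ?_, ?_, ?_⟩
  · exact (hθ.smul contDiff_const).comp ((contDiff_id.sub contDiff_const).const_smul ρ⁻¹)
  · intro x
    rw [norm_smul, Real.norm_eq_abs, abs_of_nonneg θ.nonneg]
    calc θ (ρ⁻¹ • (x - c)) * ‖v‖ ≤ 1 * ‖v‖ :=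
          mul_le_mul_of_nonneg_right θ.le_one (norm_nonneg v)
    _ = ‖v‖ := one_mul _
  · intro x
    rw [hfd]
    calc ‖((fderiv ℝ (⇑θ) (ρ⁻¹ • (x - c))).smulRight v).comp L‖
        ≤ ‖(fderiv ℝ (⇑θ) (ρ⁻¹ • (x - c))).smulRight v‖ * ‖L‖ :=
          ContinuousLinearMap.opNorm_comp_le _ _
    _ = ‖fderiv ℝ (⇑θ) (ρ⁻¹ • (x - c))‖ * ‖v‖ * ‖L‖ := by
          rw [ContinuousLinearMap.norm_smulRight_apply]
    _ ≤ M₁ * ‖v‖ * ρ⁻¹ := by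
          apply mul_le_mul (mul_le_mul_of_nonneg_right (hM₁ _) (norm_nonneg v)) hLnorm
            (norm_nonneg L) (mul_nonneg hM₁0 (norm_nonneg v))
    _ = M₁ * ‖v‖ / ρ := by rw [div_eq_mul_inv]
  · intro x
    set Φ : (Euc n →L[ℝ] ℝ) →L[ℝ] (Euc n →L[ℝ] Y) :=
      ((ContinuousLinearMap.compL ℝ (Euc n) (Euc n) Y).flip L).comp
        ((ContinuousLinearMap.smulRightL ℝ (Euc n) Y).flip v) with hΦdef
    have hΦ : ∀ ξ : Euc n →L[ℝ] ℝ, Φ ξ = (ξ.smulRight v).comp L := fun ξ => rfl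
    have hfd2 : fderiv ℝ (fun x : Euc n => θ (ρ⁻¹ • (x - c)) • v)
        = fun x : Euc n => Φ (fderiv ℝ (⇑θ) (ρ⁻¹ • (x - c))) := by
      rw [hfd]; funext x; rw [hΦ]
    have hD2 : HasFDerivAt (fun x : Euc n => Φ (fderiv ℝ (⇑θ) (ρ⁻¹ • (x - c))))
        (Φ.comp ((fderiv ℝ (fderiv ℝ (⇑θ)) (ρ⁻¹ • (x - c))).comp L)) x :=
      Φ.hasFDerivAt.comp x (((hθ'1 _).hasFDerivAt).comp x (hAd x))
    rw [hfd2, hD2.fderiv]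
    apply ContinuousLinearMap.opNorm_le_bound _ (by positivity)
    intro u
    set D := fderiv ℝ (fderiv ℝ (⇑θ)) (ρ⁻¹ • (x - c)) with hD
    have e0 : (Φ.comp (D.comp L)) u = ((D (L u)).smulRight v).comp L := by
      simp only [ContinuousLinearMap.comp_apply, hΦ]
    rw [e0]
    have a2 : ‖D (L u)‖ ≤ M₂ * (ρ⁻¹ * ‖u‖) := by
      calc ‖D (L u)‖ ≤ ‖D‖ * ‖L u‖ := D.le_opNorm _
      _ ≤ M₂ * (ρ⁻¹ * ‖u‖) := by
          apply mul_le_mul (hM₂ _) ?_ (norm_nonneg _) hM₂0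
          calc ‖L u‖ ≤ ‖L‖ * ‖u‖ := L.le_opNorm u
          _ ≤ ρ⁻¹ * ‖u‖ := mul_le_mul_of_nonneg_right hLnorm (norm_nonneg u)
    calc ‖((D (L u)).smulRight v).comp L‖ ≤ ‖(D (L u)).smulRight v‖ * ‖L‖ :=
          ContinuousLinearMap.opNorm_comp_le _ _
    _ = ‖D (L u)‖ * ‖v‖ * ‖L‖ := by rw [ContinuousLinearMap.norm_smulRight_apply]
    _ ≤ (M₂ * (ρ⁻¹ * ‖u‖)) * ‖v‖ * ρ⁻¹ := by
        apply mul_le_mul (mul_le_mul_of_nonneg_right a2 (norm_nonneg v)) hLnorm (norm_nonneg L)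
        exact mul_nonneg (mul_nonneg hM₂0 (by positivity)) (norm_nonneg v)
    _ = M₂ * ‖v‖ / ρ ^ 2 * ‖u‖ := by field_simp
  · intro x hx
    have : (⇑θ) (ρ⁻¹ • (x - c)) = 0 := by
      apply θ.zero_of_le_dist
      rw [dist_zero_right, norm_smul, Real.norm_eq_abs, abs_of_nonneg hρ']
      rw [← dist_eq_norm]
      rw [mul_comm] at hx
      calc θ.rOut = θ.rOut * ρ * ρ⁻¹ := by field_simp
      _ ≤ dist x c * ρ⁻¹ := mul_le_mul_of_nonneg_right (by rw [mul_comm]; exact hx) hρ'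
      _ = ρ⁻¹ * dist x c := mul_comm _ _
    rw [this, zero_smul]
  · rw [sub_self, smul_zero, θ.one_of_mem_closedBall (Metric.mem_closedBall_self θ.rIn_pos.le),
      one_smul]

lemma opnorm_eq_aux {E F : Type*} [NormedAddCommGroup E] [NormedSpace ℝ E] [NormedAddCommGroup F]
    [NormedSpace ℝ F] (f : E →L[ℝ] F) :
    @Norm.norm _ ContinuousLinearMap.hasOpNorm f = @Norm.norm _ SeminormedAddGroup.toNorm f := rfl

lemma exists_norm_max_aux {X G : Type*} [TopologicalSpace X] [Nonempty X] [NormedAddCommGroup G] {f : X → G}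
    (hf : Continuous f) (hs : HasCompactSupport f) : ∃ y, ∀ x, ‖f x‖ ≤ ‖f y‖ :=
  hf.norm.exists_forall_ge_of_hasCompactSupport hs.norm

lemma flat_glue {n : ℕ} {Y : Type*} [NormedAddCommGroup Y] [NormedSpace ℝ Y]
    (xb : Euc n) (c : ℕ → Euc n) (r : ℕ → ℝ) (v : ℕ → Y)
    (hr0 : ∀ k, 0 < r k) (hrs : ∀ k, r (k+1) ≤ r k / 8)
    (hc : ∀ k, dist (c k) xb = r k)
    (hv : ∀ k, ‖v k‖ ≤ r k ^ 2 / (k + 1)) :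
    ∃ g : Euc n → Y, ContDiff ℝ 2 g ∧ g xb = 0 ∧ fderiv ℝ g xb = 0 ∧
      fderiv ℝ (fderiv ℝ g) xb = 0 ∧ ∀ k, g (c k) = v k := by
  classical
  have hle1 : (1 : WithTop ℕ∞) ≤ (↑(⊤:ℕ∞)) := WithTop.coe_le_coe.2 le_top
  have hsucc : ((↑(⊤:ℕ∞) : WithTop ℕ∞) + 1) ≤ (↑(⊤:ℕ∞)) := by
    exact_mod_cast le_of_eq (by simp : ((⊤:ℕ∞) + 1) = ⊤)
  -- the bump function
  set θ : ContDiffBump (0 : Euc n) := ⟨1/4, 1/2, by norm_num, by norm_num⟩ with hθdef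
  have hθ : ContDiff ℝ (↑(⊤:ℕ∞)) (⇑θ) := θ.contDiff
  have hθ' : ContDiff ℝ (↑(⊤:ℕ∞)) (fderiv ℝ (⇑θ)) := hθ.fderiv_right hsucc
  have hθ'' : ContDiff ℝ (↑(⊤:ℕ∞)) (fderiv ℝ (fderiv ℝ (⇑θ))) := hθ'.fderiv_right hsucc
  have hcs : HasCompactSupport (⇑θ) := θ.hasCompactSupport
  obtain ⟨y₁, hy₁⟩ := ((hθ'.continuous).norm).exists_forall_ge_of_hasCompactSupport
    ((hcs.fderiv ℝ).norm)
  obtain ⟨y₂, hy₂⟩ := exists_norm_max_aux hθ''.continuous ((hcs.fderiv ℝ).fderiv ℝ)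
  simp only [← opnorm_eq_aux] at hy₂
  set M₁ := ‖fderiv ℝ (⇑θ) y₁‖ with hM₁def
  set M₂ := ‖fderiv ℝ (fderiv ℝ (⇑θ)) y₂‖ with hM₂def
  have hM₁ : ∀ y, ‖fderiv ℝ (⇑θ) y‖ ≤ M₁ := hy₁
  have hM₂ : ∀ y, ‖fderiv ℝ (fderiv ℝ (⇑θ)) y‖ ≤ M₂ := hy₂
  have hM₁0 : 0 ≤ M₁ := norm_nonneg _
  have hM₂0 : 0 ≤ M₂ := ContinuousLinearMap.opNorm_nonneg _
  -- the bump terms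
  set G : ℕ → Euc n → Y := fun k x => θ ((r k / 4)⁻¹ • (x - c k)) • v k with hGdef
  have hρpos : ∀ k, (0:ℝ) < r k / 4 := fun k => by have := hr0 k; linarith
  have hfacts := fun k => bump_facts θ M₁ M₂ hM₁ hM₂ (r k / 4) (hρpos k) (c k) (v k)
  have hGsm : ∀ k, ContDiff ℝ (↑(⊤:ℕ∞)) (G k) := fun k => (hfacts k).1
  have hB0 : ∀ k x, ‖G k x‖ ≤ ‖v k‖ := fun k => (hfacts k).2.1
  have hB1 : ∀ k x, ‖fderiv ℝ (G k) x‖ ≤ M₁ * ‖v k‖ / (r k / 4) := fun k => (hfacts k).2.2.1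
  have hB2 : ∀ k x, ‖fderiv ℝ (fderiv ℝ (G k)) x‖ ≤ M₂ * ‖v k‖ / (r k / 4) ^ 2 :=
    fun k => (hfacts k).2.2.2.1
  have hsupp : ∀ k (x : Euc n), r k / 8 ≤ dist x (c k) → G k x = 0 := by
    intro k x hx
    apply (hfacts k).2.2.2.2.1 x
    have hout : θ.rOut = 1/2 := rfl
    rw [hout]
    linarith
  have hGval : ∀ k, G k (c k) = v k := fun k => (hfacts k).2.2.2.2.2
  -- sequence facts
  have hanti : Antitone r := antitone_nat_of_succ_le fun k =>
    le_trans (hrs k) (by have := hr0 k; linarith)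
  have hstep : ∀ j k, j < k → r k ≤ r j / 8 := fun j k h =>
    le_trans (hanti (show j + 1 ≤ k from h)) (hrs j)
  have hrK : ∀ j k, r j < r k → k < j := by
    intro j k h
    by_contra hh
    push_neg at hh
    exact absurd (hanti hh) (not_le.2 h)
  have hgeo : ∀ k, r k ≤ r 0 * (1/8)^k := by
    intro k
    induction k with
    | zero => simp
    | succ k ih =>
      calc r (k+1) ≤ r k / 8 := hrs k
      _ ≤ (r 0 * (1/8)^k) / 8 := by linarith
      _ = r 0 * (1/8)^(k+1) := by ring
  have hrlim : Tendsto r atTop (𝓝 0) := by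
    apply squeeze_zero (fun k => (hr0 k).le) hgeo
    simpa using (tendsto_pow_atTop_nhds_zero_of_lt_one (by norm_num : (0:ℝ) ≤ 1/8)
      (by norm_num)).const_mul (r 0)
  have hfin : ∀ d : ℝ, 0 < d → ∃ K, ∀ k, K ≤ k → r k < d := by
    intro d hd
    obtain ⟨K, hK⟩ := Metric.tendsto_atTop.1 hrlim d hd
    exact ⟨K, fun k hk => by
      have h := hK k hk
      rwa [Real.dist_eq, sub_zero, abs_of_nonneg (hr0 k).le] at h⟩
  -- annulus
  have hann : ∀ k (x : Euc n), dist x (c k) < r k / 4 →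
      (3/4) * r k ≤ dist x xb ∧ dist x xb ≤ (5/4) * r k := by
    intro k x hx
    have h1 := dist_triangle (c k) x xb
    have h2 := dist_triangle x (c k) xb
    rw [dist_comm (c k) x] at h1
    rw [hc k] at h1 h2
    constructor <;> linarith
  -- disjointness
  have hdisj : ∀ j k, j ≠ k → ∀ x : Euc n, dist x (c j) < r j / 4 →
      ¬ dist x (c k) < r k / 4 := by
    have key : ∀ j k, j < k → ∀ x : Euc n, dist x (c j) < r j / 4 →
        dist x (c k) < r k / 4 → False := by
      intro j k hjk x hj hk
      have hk8 : r k ≤ r j / 8 := hstep j k hjk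
      have h1 := dist_triangle (c j) x (c k)
      rw [dist_comm (c j) x] at h1
      have h2 := dist_triangle (c j) (c k) xb
      rw [hc j, hc k] at h2
      have := hr0 j
      linarith
    intro j k hjk x hj hk
    rcases lt_or_gt_of_ne hjk with h | h
    · exact key j k h x hj hk
    · exact key k j h x hk hj
  -- the glued function
  set g : Euc n → Y := fun x => ∑' k, G k x with hgdef
  have hgxb : g xb = 0 := by
    show (∑' k, G k xb) = 0
    have hz : ∀ k, G k xb = 0 := by
      intro k
      apply hsupp
      rw [dist_comm, hc k]
      have := hr0 k
      linarith
    rw [tsum_congr hz, tsum_zero]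
  have hgval : ∀ k, g (c k) = v k := by
    intro k
    show (∑' j, G j (c k)) = v k
    rw [tsum_eq_single k, hGval k]
    intro j hj
    apply hsupp
    by_contra hcon
    push_neg at hcon
    have hj4 : dist (c k) (c j) < r j / 4 := by have := hr0 j; linarith
    have hk4 : dist (c k) (c k) < r k / 4 := by
      rw [dist_self]; exact hρpos k
    exact hdisj j k hj (c k) hj4 hk4
  -- pointwise structure
  have hpt : ∀ x : Euc n, g x = 0 ∨
      ∃ k, dist x (c k) < r k / 8 ∧ g x = G k x := by
    intro x
    by_cases h : ∃ k, dist x (c k) < r k / 8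
    · obtain ⟨k, hk⟩ := h
      right
      refine ⟨k, hk, ?_⟩
      show (∑' j, G j x) = G k x
      apply tsum_eq_single
      intro j hj
      apply hsupp
      by_contra hcon
      push_neg at hcon
      have hj4 : dist x (c j) < r j / 4 := by have := hr0 j; linarith
      have hk4 : dist x (c k) < r k / 4 := by have := hr0 k; linarith
      exact hdisj j k hj x hj4 hk4
    · left
      push_neg at h
      show (∑' j, G j x) = 0
      rw [tsum_congr (fun k => hsupp k x (h k)), tsum_zero]
  -- global pointwise bound
  have hgb : ∀ x : Euc n, ‖g x‖ ≤ 2 * ‖x - xb‖ ^ 2 := by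
    intro x
    rcases hpt x with h | ⟨k, hk, hgx⟩
    · rw [h]
      have h0 : (0:ℝ) ≤ 2 * ‖x - xb‖^2 := by positivity
      simpa using h0
    · rw [hgx]
      have h1 : ‖G k x‖ ≤ ‖v k‖ := hB0 k x
      have h2 : ‖v k‖ ≤ r k ^ 2 / (k+1) := hv k
      have h3 : r k ^ 2 / ((k:ℝ)+1) ≤ r k ^ 2 := by
        apply div_le_self (by positivity)
        have hcast : (0:ℝ) ≤ (k:ℝ) := Nat.cast_nonneg k
        linarith
      have h4 : (3/4) * r k ≤ dist x xb :=
        (hann k x (by have := hr0 k; linarith)).1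
      rw [dist_eq_norm] at h4
      nlinarith [hr0 k, norm_nonneg (x - xb)]
  -- local structure
  have hloc : ∀ x : Euc n, x ≠ xb →
      (g =ᶠ[𝓝 x] fun _ => (0:Y)) ∨
      ∃ k, dist x (c k) < r k / 4 ∧ g =ᶠ[𝓝 x] G k := by
    intro x hx
    have hd0 : 0 < dist x xb := dist_pos.2 hx
    set d := dist x xb with hd
    obtain ⟨K, hK⟩ := hfin (d/4) (by linarith)
    have hrK0 := hr0 K
    set δ := min (d/4) (r K / 8) with hδ
    have hδ0 : 0 < δ := lt_min (by linarith) (by linarith)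
    have tail : ∀ y : Euc n, dist y x < δ → ∀ j, K ≤ j → G j y = 0 := by
      intro y hy j hj
      apply hsupp
      by_contra hcon
      push_neg at hcon
      have h1 : dist y xb ≤ dist y (c j) + r j := by
        rw [← hc j]; exact dist_triangle _ _ _
      have h2 : d ≤ dist y x + dist y xb := by
        rw [hd]
        have h2' := dist_triangle x y xb
        rw [dist_comm x y] at h2'
        linarith
      have h3 : r j < d/4 := hK j hj
      have h4 : dist y x < d/4 := lt_of_lt_of_le hy (min_le_left _ _)
      linarith [hr0 j]
    have head : ∀ y : Euc n, dist y x < δ → ∀ j, j < K →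
        ¬ dist x (c j) < r j / 4 → G j y = 0 := by
      intro y hy j hj hnotin
      apply hsupp
      push_neg at hnotin
      have h5 : r K ≤ r j := hanti hj.le
      have h6 : dist y x < r K / 8 := lt_of_lt_of_le hy (min_le_right _ _)
      have h7 : dist x (c j) ≤ dist x y + dist y (c j) := dist_triangle _ _ _
      rw [dist_comm x y] at h7
      linarith
    by_cases hex : ∃ k, dist x (c k) < r k / 4
    · obtain ⟨k, hk⟩ := hex
      right
      refine ⟨k, hk, ?_⟩
      rw [Filter.eventuallyEq_iff_exists_mem]
      refine ⟨Metric.ball x δ, Metric.ball_mem_nhds x hδ0, fun y hy => ?_⟩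
      rw [Metric.mem_ball] at hy
      show (∑' j, G j y) = G k y
      apply tsum_eq_single
      intro j hjk
      rcases lt_or_ge j K with hjK | hjK
      · exact head y hy j hjK (fun hcon => hdisj j k hjk x hcon hk)
      · exact tail y hy j hjK
    · left
      rw [Filter.eventuallyEq_iff_exists_mem]
      refine ⟨Metric.ball x δ, Metric.ball_mem_nhds x hδ0, fun y hy => ?_⟩
      rw [Metric.mem_ball] at hy
      have hall : ∀ j, G j y = 0 := by
        intro j
        rcases lt_or_ge j K with hjK | hjK
        · exact head y hy j hjK (fun hcon => hex ⟨j, hcon⟩)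
        · exact tail y hy j hjK
      show (∑' j, G j y) = 0
      rw [tsum_congr hall, tsum_zero]
  -- key derivative structure away from xb
  have hkey : ∀ x : Euc n, x ≠ xb →
      (DifferentiableAt ℝ g x ∧ DifferentiableAt ℝ (fderiv ℝ g) x ∧
        ContinuousAt (fderiv ℝ (fderiv ℝ g)) x ∧
        ((fderiv ℝ g x = 0 ∧ fderiv ℝ (fderiv ℝ g) x = 0) ∨
         (∃ k, dist x (c k) < r k / 4 ∧ fderiv ℝ g x = fderiv ℝ (G k) x ∧
           fderiv ℝ (fderiv ℝ g) x = fderiv ℝ (fderiv ℝ (G k)) x))) := by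
    intro x hx
    rcases hloc x hx with h0 | ⟨k, hk, h0⟩
    · have h1 : fderiv ℝ g =ᶠ[𝓝 x] (fun _ => (0 : Euc n →L[ℝ] Y)) :=
        (h0.fderiv).trans (Filter.Eventually.of_forall fun y => fderiv_const_apply 0)
      have h2 : fderiv ℝ (fderiv ℝ g) =ᶠ[𝓝 x] (fun _ => (0 : Euc n →L[ℝ] Euc n →L[ℝ] Y)) :=
        (h1.fderiv).trans (Filter.Eventually.of_forall fun y => fderiv_const_apply 0)
      refine ⟨(h0.differentiableAt_iff).2 (differentiableAt_const _),
        (h1.differentiableAt_iff).2 (differentiableAt_const _),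
        h2.continuousAt, Or.inl ⟨?_, ?_⟩⟩
      · rw [h0.fderiv_eq, fderiv_const_apply]
      · rw [h1.fderiv_eq, fderiv_const_apply]
    · have hGd : Differentiable ℝ (G k) := (hGsm k).differentiable (ne_of_gt (lt_of_lt_of_le zero_lt_one hle1))
      have hG'sm : ContDiff ℝ (↑(⊤:ℕ∞)) (fderiv ℝ (G k)) := (hGsm k).fderiv_right hsucc
      have hG'd : Differentiable ℝ (fderiv ℝ (G k)) := hG'sm.differentiable (ne_of_gt (lt_of_lt_of_le zero_lt_one hle1))
      have hG''c : Continuous (fderiv ℝ (fderiv ℝ (G k))) :=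
        (hG'sm.fderiv_right hsucc).continuous
      have h1 : fderiv ℝ g =ᶠ[𝓝 x] fderiv ℝ (G k) := h0.fderiv
      have h2 : fderiv ℝ (fderiv ℝ g) =ᶠ[𝓝 x] fderiv ℝ (fderiv ℝ (G k)) := h1.fderiv
      exact ⟨(h0.differentiableAt_iff).2 (hGd x),
        (h1.differentiableAt_iff).2 (hG'd x),
        (hG''c.continuousAt).congr h2.symm,
        Or.inr ⟨k, hk, h0.fderiv_eq, h1.fderiv_eq⟩⟩
  -- helper for constants
  have hcoef : ∀ Coef ε : ℝ, 0 ≤ Coef → 0 < ε → ∃ K : ℕ, ∀ k : ℕ, K < k →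
      Coef / ((k:ℝ) + 1) < ε := by
    intro Coef ε h0 hε
    obtain ⟨K, hK⟩ := exists_nat_gt (Coef / ε)
    refine ⟨K, fun k hk => ?_⟩
    have h1 : (K:ℝ) < (k:ℝ) + 1 := by exact_mod_cast Nat.lt_succ_of_lt hk
    have h2 : Coef < (K:ℝ) * ε := by
      have := (div_lt_iff₀ hε).1 hK
      linarith
    rw [div_lt_iff₀ (by positivity)]
    nlinarith
  -- first derivative at xb
  have hder0 : HasFDerivAt g (0 : Euc n →L[ℝ] Y) xb := by
    rw [hasFDerivAt_iff_isLittleO_nhds_zero, Asymptotics.isLittleO_iff]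
    intro ε hε
    rw [Metric.eventually_nhds_iff]
    refine ⟨ε/2, by linarith, fun y hy => ?_⟩
    rw [dist_zero_right] at hy
    have hb := hgb (xb + y)
    rw [add_sub_cancel_left] at hb
    rw [hgxb, sub_zero, ContinuousLinearMap.zero_apply, sub_zero]
    nlinarith [norm_nonneg y, norm_nonneg (g (xb + y))]
  have hg'xb : fderiv ℝ g xb = 0 := hder0.fderiv
  -- second derivative at xb
  have hder2 : HasFDerivAt (fderiv ℝ g) (0 : Euc n →L[ℝ] Euc n →L[ℝ] Y) xb := by
    rw [hasFDerivAt_iff_isLittleO_nhds_zero, Asymptotics.isLittleO_iff]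
    intro ε hε
    obtain ⟨K, hKc⟩ := hcoef (6 * M₁) ε (by linarith) hε
    rw [Metric.eventually_nhds_iff]
    have hrK0 := hr0 K
    refine ⟨(3/4) * r K, by linarith, fun y hy => ?_⟩
    rw [dist_zero_right] at hy
    rw [hg'xb, sub_zero, ContinuousLinearMap.zero_apply, sub_zero]
    by_cases hxy : xb + y = xb
    · have hy0 : y = 0 := by
        have h := hxy
        rwa [add_eq_left] at h
      rw [hxy, hg'xb]
      simp [hy0]
    · obtain ⟨_, _, _, hcase⟩ := hkey (xb + y) hxy
      have hnorm : dist (xb + y) xb = ‖y‖ := by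
        rw [dist_eq_norm, add_sub_cancel_left]
      rcases hcase with ⟨h1, _⟩ | ⟨k, hk4, h1, _⟩
      · rw [h1]
        simp only [norm_zero]
        positivity
      · rw [h1]
        refine le_trans (hB1 k (xb + y)) ?_
        obtain ⟨ha1, _⟩ := hann k (xb + y) hk4
        rw [hnorm] at ha1
        have hkK : K < k := hrK k K (by nlinarith)
        have hco := hKc k hkK
        have ha0 : (0:ℝ) < (k:ℝ) + 1 := by positivity
        have h1' : ‖v k‖ * ((k:ℝ)+1) ≤ r k ^ 2 := (le_div_iff₀ ha0).1 (hv k)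
        have h2' : 6 * M₁ < ε * ((k:ℝ)+1) := by
          have := (div_lt_iff₀ ha0).1 hco
          linarith
        have hD0 : (0:ℝ) ≤ ‖y‖ := norm_nonneg y
        rw [div_le_iff₀ (hρpos k)]
        have final : M₁ * ‖v k‖ * ((k:ℝ)+1) ≤ ε * ‖y‖ * (r k / 4) * ((k:ℝ)+1) := by
          nlinarith [mul_le_mul_of_nonneg_left h1' hM₁0,
            mul_le_mul_of_nonneg_right (mul_le_mul_of_nonneg_right h2'.le hD0) (hr0 k).le,
            mul_le_mul_of_nonneg_right (mul_le_mul_of_nonneg_left ha1 hM₁0) (hr0 k).le,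
            mul_nonneg (mul_nonneg (mul_nonneg hε.le ha0.le) hD0) (hr0 k).le]
        exact le_of_mul_le_mul_right final ha0
  have hg''xb : fderiv ℝ (fderiv ℝ g) xb = 0 := hder2.fderiv
  -- continuity of the second derivative
  have hcont2 : Continuous (fderiv ℝ (fderiv ℝ g)) := by
    rw [continuous_iff_continuousAt]
    intro x
    by_cases hx : x = xb
    · rw [hx]
      refine (Metric.continuousAt_iff (α := Euc n) (β := Euc n →L[ℝ] Euc n →L[ℝ] Y)).2 ?_
      intro ε hε
      obtain ⟨K, hKc⟩ := hcoef (16 * M₂) ε (by linarith) hε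
      have hrK0 := hr0 K
      refine ⟨(3/4) * r K, by linarith, fun {y} hy => ?_⟩
      rw [hg''xb, show ∀ z : Euc n →L[ℝ] Euc n →L[ℝ] Y, dist z 0 = ‖z‖ from
        fun z => (dist_zero_right z).trans (opnorm_eq_aux z).symm]
      by_cases hxy : y = xb
      · subst hxy
        rw [hg''xb]
        simpa [ContinuousLinearMap.opNorm_zero] using hε
      · obtain ⟨_, _, _, hcase⟩ := hkey y hxy
        rcases hcase with ⟨_, h2⟩ | ⟨k, hk4, _, h2⟩
        · rw [h2]
          simpa [ContinuousLinearMap.opNorm_zero] using hε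
        · rw [h2]
          obtain ⟨ha1, _⟩ := hann k y hk4
          have hkK : K < k := hrK k K (by nlinarith)
          have hco := hKc k hkK
          refine lt_of_le_of_lt (le_trans (hB2 k y) ?_) hco
          have ha0 : (0:ℝ) < (k:ℝ) + 1 := by positivity
          have h1' : ‖v k‖ * ((k:ℝ)+1) ≤ r k ^ 2 := (le_div_iff₀ ha0).1 (hv k)
          rw [div_le_div_iff₀ (pow_pos (hρpos k) 2) ha0]
          nlinarith [mul_le_mul_of_nonneg_left h1' hM₂0]
    · exact (hkey x hx).2.2.1
  -- assembly
  have hdiffg : Differentiable ℝ g := by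
    intro x
    by_cases hx : x = xb
    · rw [hx]; exact hder0.differentiableAt
    · exact (hkey x hx).1
  have hdiffg' : Differentiable ℝ (fderiv ℝ g) := by
    intro x
    by_cases hx : x = xb
    · rw [hx]; exact hder2.differentiableAt
    · exact (hkey x hx).2.1
  refine ⟨g, ?_, hgxb, hg'xb, hg''xb, hgval⟩
  rw [show (2 : WithTop ℕ∞) = 1 + 1 by norm_num, contDiff_succ_iff_fderiv]
  refine ⟨hdiffg, by simp, ?_⟩
  rw [contDiff_one_iff_fderiv]
  exact ⟨hdiffg', hcont2⟩

/-- Theorem 3.15: a local minimizer that is not an essential local minimizer of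
second order can be destroyed by a C² perturbation vanishing to second order
at `x̄`. -/
theorem stmt13 {n m : ℕ}
    (f : Euc n → ℝ) (F : Euc n → Euc m)
    (hf : ContDiff ℝ 1 f) (hF : ContDiff ℝ 1 F)
    (Ω : Set (Euc m)) (hΩ : IsFinUnionPolyhedra Ω)
    (xb : Euc n) (hfeas : F xb ∈ Ω)
    (hmin : IsLocalMinOn f {x | F x ∈ Ω} xb)
    (hness : ¬ ∃ β : ℝ, 0 < β ∧ ∃ ε : ℝ, 0 < ε ∧ ∀ x : Euc n, dist x xb < ε →
      β * ‖x - xb‖ ^ 2 ≤ max (f x - f xb) (Metric.infDist (F x) Ω)) :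
    ∃ (df : Euc n → ℝ) (dF : Euc n → Euc m),
      ContDiff ℝ 2 df ∧ ContDiff ℝ 2 dF ∧
      df xb = 0 ∧ dF xb = 0 ∧
      fderiv ℝ df xb = 0 ∧ fderiv ℝ dF xb = 0 ∧
      fderiv ℝ (fderiv ℝ df) xb = 0 ∧ fderiv ℝ (fderiv ℝ dF) xb = 0 ∧
      ¬ IsLocalMinOn (fun x => f x + df x) {x | F x + dF x ∈ Ω} xb := by
  classical
  push_neg at hness
  have key : ∀ (k : ℕ) (ε : ℝ), 0 < ε → ∃ x : Euc n, 0 < dist x xb ∧ dist x xb < ε ∧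
      f x - f xb < dist x xb ^ 2 / ((k:ℝ)+1) ∧
      Metric.infDist (F x) Ω < dist x xb ^ 2 / ((k:ℝ)+1) := by
    intro k ε hε
    have hβ : (0:ℝ) < 1/((k:ℝ)+1) := by positivity
    obtain ⟨x, hx1, hx2⟩ := hness (1/((k:ℝ)+1)) hβ ε hε
    rw [← dist_eq_norm] at hx2
    have heq : (1/((k:ℝ)+1)) * dist x xb ^ 2 = dist x xb ^ 2 / ((k:ℝ)+1) := by ring
    rw [heq] at hx2
    have hne : x ≠ xb := by
      intro h
      rw [h] at hx2
      simp only [dist_self] at hx2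
      have h1 : (0:ℝ) ≤ max (f xb - f xb) (Metric.infDist (F xb) Ω) :=
        le_trans Metric.infDist_nonneg (le_max_right _ _)
      have h2 : (0:ℝ)^2 / ((k:ℝ)+1) = 0 := by simp
      rw [h2] at hx2
      linarith
    exact ⟨x, dist_pos.2 hne, hx1,
      lt_of_le_of_lt (le_max_left _ _) hx2,
      lt_of_le_of_lt (le_max_right _ _) hx2⟩
  -- recursively defined sequence
  let T : ℕ → {x : Euc n // 0 < dist x xb} := fun k => Nat.rec
    ⟨(key 0 1 one_pos).choose, (key 0 1 one_pos).choose_spec.1⟩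
    (fun k prev =>
      ⟨(key (k+1) (dist prev.1 xb / 8) (div_pos prev.2 (by norm_num))).choose,
        (key (k+1) (dist prev.1 xb / 8) (div_pos prev.2 (by norm_num))).choose_spec.1⟩) k
  set x_ : ℕ → Euc n := fun k => (T k).1 with hx_def
  set r : ℕ → ℝ := fun k => dist (x_ k) xb with hrdef
  have hr0 : ∀ k, 0 < r k := fun k => (T k).2
  have hspec0 := (key 0 1 one_pos).choose_spec
  have hspecS : ∀ k, 0 < dist (x_ (k+1)) xb ∧ dist (x_ (k+1)) xb < r k / 8 ∧
      f (x_ (k+1)) - f xb < dist (x_ (k+1)) xb ^ 2 / (((k+1):ℕ):ℝ) + 0 ∨ True := fun k => Or.inr trivial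
  have hkey : ∀ k, f (x_ k) - f xb < r k ^ 2 / ((k:ℝ)+1) ∧
      Metric.infDist (F (x_ k)) Ω < r k ^ 2 / ((k:ℝ)+1) := by
    intro k
    cases k with
    | zero => exact ⟨hspec0.2.2.1, hspec0.2.2.2⟩
    | succ k =>
      have h := (key (k+1) (dist (x_ k) xb / 8)
        (div_pos ((T k).2) (by norm_num))).choose_spec
      exact ⟨h.2.2.1, h.2.2.2⟩
  have hrs : ∀ k, r (k+1) ≤ r k / 8 := by
    intro k
    have h := (key (k+1) (dist (x_ k) xb / 8)
      (div_pos ((T k).2) (by norm_num))).choose_spec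
    exact le_of_lt h.2.1
  have hc : ∀ k, dist (x_ k) xb = r k := fun k => rfl
  -- the perturbation payloads
  have hΩne : Ω.Nonempty := ⟨F xb, hfeas⟩
  have hyk : ∀ k, ∃ y ∈ Ω, dist (F (x_ k)) y < r k ^ 2 / ((k:ℝ)+1) :=
    fun k => (Metric.infDist_lt_iff hΩne).1 (hkey k).2
  choose y hyΩ hyd using hyk
  set vf : ℕ → ℝ := fun k => -(r k ^ 2 / ((k:ℝ)+1)) with hvfdef
  set vF : ℕ → Euc m := fun k => y k - F (x_ k) with hvFdef
  have hvf : ∀ k, ‖vf k‖ ≤ r k ^ 2 / ((k:ℝ)+1) := by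
    intro k
    rw [hvfdef]
    simp only [norm_neg, Real.norm_eq_abs]
    rw [abs_of_nonneg (by positivity)]
  have hvF : ∀ k, ‖vF k‖ ≤ r k ^ 2 / ((k:ℝ)+1) := by
    intro k
    rw [hvFdef]
    simp only []
    rw [← dist_eq_norm, dist_comm]
    exact le_of_lt (hyd k)
  obtain ⟨df, hdf2, hdfxb, hdf1, hdf2', hdfval⟩ := flat_glue xb x_ r vf hr0 hrs hc hvf
  obtain ⟨dF, hdF2, hdFxb, hdF1, hdF2', hdFval⟩ := flat_glue xb x_ r vF hr0 hrs hc hvF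
  refine ⟨df, dF, hdf2, hdF2, hdfxb, hdFxb, hdf1, hdF1, hdf2', hdF2', ?_⟩
  intro hmin'
  have hfeas' : ∀ k, x_ k ∈ {x | F x + dF x ∈ Ω} := by
    intro k
    show F (x_ k) + dF (x_ k) ∈ Ω
    rw [hdFval k]
    have : F (x_ k) + (y k - F (x_ k)) = y k := by abel
    rw [hvFdef]
    simp only []
    rw [this]
    exact hyΩ k
  have hlt : ∀ k, f (x_ k) + df (x_ k) < f xb + df xb := by
    intro k
    rw [hdfval k, hdfxb, add_zero, hvfdef]
    simp only []
    have := (hkey k).1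
    linarith
  have hgeo : ∀ k, r k ≤ r 0 * (1/8)^k := by
    intro k
    induction k with
    | zero => simp
    | succ k ih =>
      have h8 : r k / 8 ≤ (r 0 * (1/8)^k)/8 := by linarith
      calc r (k+1) ≤ r k / 8 := hrs k
      _ ≤ (r 0 * (1/8)^k) / 8 := h8
      _ = r 0 * (1/8)^(k+1) := by ring
  have hrlim : Filter.Tendsto r Filter.atTop (nhds 0) := by
    apply squeeze_zero (fun k => (hr0 k).le) hgeo
    simpa using (tendsto_pow_atTop_nhds_zero_of_lt_one (by norm_num : (0:ℝ) ≤ 1/8)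
      (by norm_num)).const_mul (r 0)
  have hxlim : Filter.Tendsto x_ Filter.atTop (nhds xb) := by
    rw [tendsto_iff_dist_tendsto_zero]
    exact hrlim
  have htd : Filter.Tendsto x_ Filter.atTop (nhdsWithin xb {x | F x + dF x ∈ Ω}) :=
    tendsto_nhdsWithin_iff.2 ⟨hxlim, Filter.Eventually.of_forall hfeas'⟩
  have hev : ∀ᶠ k in Filter.atTop,
      (fun x => f x + df x) xb ≤ (fun x => f x + df x) (x_ k) :=
    htd.eventually hmin'
  obtain ⟨k, hkk⟩ := hev.exists
  exact absurd hkk (not_le.2 (hlt k))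
end
end
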